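/- Variance decomposition of the regularized return (Corollary variance_return_decomp): Let β ≥ 0, let r be a bounded measurable reward, and let π be a Markov policy (with kernels admitting ν-densities with bounded measurable log-densities when β > 0). Then the variance of the regularized return under the trajectory law P^π decomposes as Var_{τ∼P^π}( Σ_{t=1}^T ( r_t(s_t,a_t) − β log π_t(a_t|s_t) ) ) = Σ_{t=1}^T E^π[ (A^π_{t,r}(s_t,a_t))² ] + Σ_{t=0}^{T−1} E^π[ (δ^π_{t,r})² ], where δ^π_{t,r} := V^π_{t+1,r}(s_{t+1}) − (P_t V^π_{t+1,r})(s_t,a_t) for t ≥ 1 and δ^π_{0,r} := V^π_{1,r}(s₁) − ∫ V^π_{1,r} dP₀. -/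

import Mathlib

open MeasureTheory ProbabilityTheory Real
open scoped ENNReal RealInnerProductSpace

noncomputable section

namespace IRL

variable {S A : Type*} [MeasurableSpace S] [MeasurableSpace A]

/-- A reward tuple `(r_t)` of bounded measurable functions. -/
def IsBddReward (r : ℕ → S → A → ℝ) : Prop :=
  ∀ t, Measurable (fun q : S × A => r t q.1 q.2) ∧ ∃ C, ∀ s a, |r t s a| ≤ C

/-- `p` is a family of `ν`-probability densities of a Markov policy. -/
def IsPolicyDensity (ν : Measure A) (p : ℕ → S → A → ℝ) : Prop :=
  (∀ t, Measurable (fun q : S × A => p t q.1 q.2)) ∧ (∀ t s a, 0 ≤ p t s a) ∧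
    (∀ t s, ∫ a, p t s a ∂ν = 1)

/-- the log-densities `log π_t` are bounded (in particular the densities are positive). -/
def HasBddLogDensity (p : ℕ → S → A → ℝ) : Prop :=
  ∀ t, (∀ s a, 0 < p t s a) ∧ ∃ C, ∀ s a, |Real.log (p t s a)| ≤ C

variable (T : ℕ) (P : ℕ → Kernel (S × A) S) (ν : Measure A)

/-- Soft-optimal value function `V*_{t,r}` (backward recursion, `V* t ≡ 0` for `t > T`). -/
def Vstar (β : ℝ) (r : ℕ → S → A → ℝ) (t : ℕ) (s : S) : ℝ :=
  if T < t then 0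
  else β * Real.log (∫ a, Real.exp ((r t s a + ∫ s', Vstar β r (t + 1) s' ∂(P t (s, a))) / β) ∂ν)
termination_by T + 1 - t
decreasing_by omega

/-- Soft-optimal state-action value `Q*_{t,r}`. -/
def Qstar (β : ℝ) (r : ℕ → S → A → ℝ) (t : ℕ) (s : S) (a : A) : ℝ :=
  r t s a + ∫ s', Vstar T P ν β r (t + 1) s' ∂(P t (s, a))

/-- `ν`-density of the soft-optimal policy `π*_r`. -/
def piStar (β : ℝ) (r : ℕ → S → A → ℝ) (t : ℕ) (s : S) (a : A) : ℝ :=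
  Real.exp ((Qstar T P ν β r t s a - Vstar T P ν β r t s) / β)

/-- Value function `V^π_{t,r}` of a policy given by densities `p` (with `β = 0` this is the
unregularized value function `V^{π,0}`). -/
def Vpol (β : ℝ) (p r : ℕ → S → A → ℝ) (t : ℕ) (s : S) : ℝ :=
  if T < t then 0
  else ∫ a,
    (r t s a + (∫ s', Vpol β p r (t + 1) s' ∂(P t (s, a))) - β * Real.log (p t s a)) * p t s a ∂ν
termination_by T + 1 - t
decreasing_by omega

/-- `Q^π_{t,r}` for a policy given by densities `p`. -/
def Qpol (β : ℝ) (p r : ℕ → S → A → ℝ) (t : ℕ) (s : S) (a : A) : ℝ :=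
  r t s a + ∫ s', Vpol T P ν β p r (t + 1) s' ∂(P t (s, a))

/-- Regularized advantage `A^π_{t,r}(s,a) = Q^π - V^π - β log π_t(a|s)`. -/
def Apol (β : ℝ) (p r : ℕ → S → A → ℝ) (t : ℕ) (s : S) (a : A) : ℝ :=
  Qpol T P ν β p r t s a - Vpol T P ν β p r t s - β * Real.log (p t s a)

variable (P0 : Measure S)

/-- Optimal value `J*(r) = ∫ V*_{1,r} dP₀`. -/
def Jstar (β : ℝ) (r : ℕ → S → A → ℝ) : ℝ := ∫ s, Vstar T P ν β r 1 s ∂P0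

/-- Expected (regularized) return `J(r,π)` of a density policy. -/
def Jpol (β : ℝ) (p r : ℕ → S → A → ℝ) : ℝ := ∫ s, Vpol T P ν β p r 1 s ∂P0

/-- Iterated expectation, from time `t` in state `s`, of a trajectory functional `g` under a
(kernel) Markov policy `π`; coordinates of the trajectory outside `{1,…,T}` are irrelevant
junk values. -/
def polExp [Nonempty S] [Nonempty A] (pol : ℕ → Kernel S A) (g : (ℕ → S × A) → ℝ) (t : ℕ)
    (s : S) : ℝ :=
  if T < t then g (fun _ => (Classical.arbitrary S, Classical.arbitrary A))
  else ∫ a, ∫ s', polExp pol (fun τ => g (Function.update τ t (s, a))) (t + 1) s' ∂(P t (s, a))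
    ∂(pol t s)
termination_by T + 1 - t
decreasing_by omega

/-- `μ` is the trajectory law `P^π` of the Markov policy `π` (with initial distribution `P₀`),
characterized through integrals of all bounded measurable trajectory functionals. -/
def IsTrajLaw [Nonempty S] [Nonempty A] (pol : ℕ → Kernel S A) (μ : Measure (ℕ → S × A)) : Prop :=
  IsProbabilityMeasure μ ∧
    ∀ g : (ℕ → S × A) → ℝ, Measurable g → (∃ C, ∀ τ, |g τ| ≤ C) →
      ∫ τ, g τ ∂μ = ∫ s, polExp T P pol g 1 s ∂P0

/-- The kernel `s ↦ p t s ⬝ ν` of a policy given by densities. -/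
def densKernel [IsFiniteMeasure ν] (p : ℕ → S → A → ℝ) (t : ℕ) : Kernel S A :=
  Kernel.withDensity (Kernel.const S ν) fun s a => ENNReal.ofReal (p t s a)

open Classical in
/-- Kullback–Leibler divergence `∫ log (dμ/dμ') dμ` if `μ ≪ μ'` (`∞` otherwise). -/
def KL {X : Type*} [MeasurableSpace X] (μ μ' : Measure X) : ℝ≥0∞ :=
  if μ ≪ μ' ∧ Integrable (fun x => Real.log (μ.rnDeriv μ' x).toReal) μ then
    ENNReal.ofReal (∫ x, Real.log (μ.rnDeriv μ' x).toReal ∂μ)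
  else ⊤

/-- Squared Hellinger distance, computed with the dominating measure `μ + μ'`. -/
def sqHellinger {X : Type*} [MeasurableSpace X] (μ μ' : Measure X) : ℝ :=
  ∫ x, (Real.sqrt ((μ.rnDeriv (μ + μ') x).toReal)
      - Real.sqrt ((μ'.rnDeriv (μ + μ') x).toReal)) ^ 2 ∂(μ + μ')

/-- Second directional derivative. -/
def D2 {E : Type*} [NormedAddCommGroup E] [NormedSpace ℝ E] (F : E → ℝ) (θ ξ ζ : E) : ℝ :=
  fderiv ℝ (fun x => fderiv ℝ F x ζ) θ ξ

/-- Third directional derivative. -/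
def D3 {E : Type*} [NormedAddCommGroup E] [NormedSpace ℝ E] (F : E → ℝ) (θ ξ ζ ω : E) : ℝ :=
  fderiv ℝ (fun x => D2 F x ζ ω) θ ξ

end IRL

open MeasureTheory ProbabilityTheory Real
open scoped ENNReal

set_option linter.unusedSectionVars false
namespace VarAux
open IRL

variable {S A : Type*} [MeasurableSpace S] [MeasurableSpace A]

/-- integral congruence from pointwise equality -/
lemma intc {X : Type*} [MeasurableSpace X] (μ : Measure X) (f g : X → ℝ)
    (h : ∀ x, f x = g x) : ∫ x, f x ∂μ = ∫ x, g x ∂μ := by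
  congr 1; exact funext h

lemma abs_int_le {X : Type*} [MeasurableSpace X] (μ : Measure X)
    [IsProbabilityMeasure μ] (f : X → ℝ) (C : ℝ) (h : ∀ x, |f x| ≤ C) :
    |∫ x, f x ∂μ| ≤ C := by
  have := norm_integral_le_of_norm_le_const (μ := μ) (f := f) (C := C)
    (Filter.Eventually.of_forall (fun x => by simpa using h x))
  simpa using this

lemma integrable_of_bdd {X : Type*} [MeasurableSpace X] {μ : Measure X} [IsFiniteMeasure μ]
    {f : X → ℝ} (C : ℝ) (hm : AEStronglyMeasurable f μ) (h : ∀ x, |f x| ≤ C) :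
    Integrable f μ :=
  (integrable_const C).mono' hm (Filter.Eventually.of_forall (fun x => by simpa using h x))

section pol

variable [Nonempty S] [Nonempty A]
variable (T : ℕ) (P : ℕ → Kernel (S × A) S) [∀ t, IsMarkovKernel (P t)]
variable (ν : Measure A) [IsFiniteMeasure ν]
variable (β : ℝ) (r p : ℕ → S → A → ℝ)

lemma integrable_p (hp : IsPolicyDensity ν p) (t : ℕ) (s : S) : Integrable (p t s) ν := by
  by_contra h
  have h2 := hp.2.2 t s
  rw [MeasureTheory.integral_undef h] at h2
  exact one_ne_zero h2.symm

lemma p_meas (hp : IsPolicyDensity ν p) (t : ℕ) (s : S) : Measurable (p t s) :=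
  (hp.1 t).comp measurable_prodMk_left

lemma densKernel_apply (hp : IsPolicyDensity ν p) (t : ℕ) (s : S) :
    densKernel ν p t s = ν.withDensity fun a => ENNReal.ofReal (p t s a) := by
  rw [IRL.densKernel, Kernel.withDensity_apply, Kernel.const_apply]
  exact ENNReal.measurable_ofReal.comp (hp.1 t)

lemma integral_densKernel (hp : IsPolicyDensity ν p) (t : ℕ) (s : S) (f : A → ℝ) :
    ∫ a, f a ∂(densKernel ν p t s) = ∫ a, f a * p t s a ∂ν := by
  rw [densKernel_apply ν p hp t s]
  have hm : Measurable fun a => (p t s a).toNNReal :=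
    measurable_real_toNNReal.comp (p_meas ν p hp t s)
  have h0 : (fun a => ENNReal.ofReal (p t s a))
      = fun a => (((p t s a).toNNReal : NNReal) : ENNReal) := rfl
  rw [h0, integral_withDensity_eq_integral_smul hm]
  refine intc _ _ _ (fun a => ?_)
  rw [NNReal.smul_def, smul_eq_mul, Real.coe_toNNReal _ (hp.2.1 t s a), mul_comm]

lemma isProbability_densKernel (hp : IsPolicyDensity ν p) (t : ℕ) (s : S) :
    IsProbabilityMeasure (densKernel ν p t s) := by
  constructor
  rw [densKernel_apply ν p hp t s, MeasureTheory.withDensity_apply _ MeasurableSet.univ,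
    MeasureTheory.setLIntegral_univ,
    ← MeasureTheory.ofReal_integral_eq_lintegral_ofReal (integrable_p ν p hp t s)
      (Filter.Eventually.of_forall (hp.2.1 t s))]
  simp [hp.2.2 t s]

lemma integral_mul_p_bound (hp : IsPolicyDensity ν p) (t : ℕ) (s : S) (φ : A → ℝ) (C : ℝ)
    (hφm : AEStronglyMeasurable φ ν) (hφ : ∀ a, |φ a| ≤ C) :
    |∫ a, φ a * p t s a ∂ν| ≤ C := by
  have hply := integrable_p ν p hp t s
  have hint : Integrable (fun a => φ a * p t s a) ν :=
    hply.bdd_mul hφm (c := C) (Filter.Eventually.of_forall fun a => by simpa using hφ a)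
  have h1 : |∫ a, φ a * p t s a ∂ν| ≤ ∫ a, |φ a| * |p t s a| ∂ν := by
    have := norm_integral_le_integral_norm (μ := ν) (fun a => φ a * p t s a)
    simpa [Real.norm_eq_abs] using this
  refine h1.trans ?_
  have habs : Integrable (fun a => |φ a| * |p t s a|) ν := by
    have := hint.abs
    refine this.congr (Filter.Eventually.of_forall fun a => ?_)
    simp [abs_mul]
  have h2 : ∫ a, |φ a| * |p t s a| ∂ν ≤ ∫ a, C * p t s a ∂ν := by
    refine integral_mono habs (hply.const_mul C) (fun a => ?_)
    rw [abs_of_nonneg (hp.2.1 t s a)]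
    exact mul_le_mul_of_nonneg_right (hφ a) (hp.2.1 t s a)
  refine h2.trans ?_
  rw [integral_const_mul, hp.2.2 t s, mul_one]

lemma kernInt_meas {Y : Type*} [MeasurableSpace Y] (κ : Kernel Y S) [IsMarkovKernel κ]
    (f : S → ℝ) (hf : Measurable f) :
    Measurable fun y => ∫ s', f s' ∂κ y :=
  (MeasureTheory.StronglyMeasurable.integral_kernel_prod_right'
    (κ := κ) ((hf.comp measurable_snd).stronglyMeasurable)).measurable

lemma kernInt_bound {Y : Type*} [MeasurableSpace Y] (κ : Kernel Y S) [IsMarkovKernel κ]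
    (f : S → ℝ) (C : ℝ) (hC : ∀ x, |f x| ≤ C) (y : Y) : |∫ s', f s' ∂κ y| ≤ C :=
  abs_int_le _ _ C hC

lemma betalog_bound (hβ : 0 ≤ β) (hlog : 0 < β → HasBddLogDensity p) (t : ℕ) :
    ∃ D, (0 ≤ D) ∧ ∀ s a, |β * Real.log (p t s a)| ≤ D := by
  rcases eq_or_lt_of_le hβ with h | h
  · exact ⟨0, le_refl 0, fun s a => by simp [← h]⟩
  · obtain ⟨C, hC⟩ := (hlog h t).2
    refine ⟨β * C, ?_, fun s a => ?_⟩
    · have h0 : (0:ℝ) ≤ C := le_trans (abs_nonneg _) (hC (Classical.arbitrary S) (Classical.arbitrary A))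
      positivity
    · rw [abs_mul, abs_of_nonneg hβ]
      exact mul_le_mul_of_nonneg_left (hC s a) hβ

end pol
end VarAux
set_option linter.unusedSectionVars false
namespace VarAux
open IRL
variable {S A : Type*} [MeasurableSpace S] [MeasurableSpace A]
section pol
variable [Nonempty S] [Nonempty A]
variable (T : ℕ) (P : ℕ → Kernel (S × A) S) [∀ t, IsMarkovKernel (P t)]
variable (ν : Measure A) [IsFiniteMeasure ν]
variable (β : ℝ) (r p : ℕ → S → A → ℝ)

lemma vpol_eq (t : ℕ) (ht : ¬ T < t) (s : S) :
    Vpol T P ν β p r t s = ∫ a,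
      (r t s a + (∫ s', Vpol T P ν β p r (t + 1) s' ∂(P t (s, a)))
        - β * Real.log (p t s a)) * p t s a ∂ν := by
  rw [IRL.Vpol, if_neg ht]

lemma vpol_top (s : S) : Vpol T P ν β p r (T + 1) s = 0 := by
  rw [IRL.Vpol, if_pos (by omega)]

theorem vpol_meas_bdd (hr : IsBddReward r) (hp : IsPolicyDensity ν p)
    (hβ : 0 ≤ β) (hlog : 0 < β → HasBddLogDensity p) (t : ℕ) :
    Measurable (fun s => Vpol T P ν β p r t s) ∧
      ∃ C, 0 ≤ C ∧ ∀ s, |Vpol T P ν β p r t s| ≤ C := by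
  by_cases ht : T < t
  · have he : ∀ s, Vpol T P ν β p r t s = 0 := fun s => by rw [IRL.Vpol, if_pos ht]
    constructor
    · simpa [funext he] using measurable_const
    · exact ⟨0, le_refl 0, fun s => by simp [he s]⟩
  · obtain ⟨mV, CV, hCV0, hCV⟩ := vpol_meas_bdd hr hp hβ hlog (t + 1)
    obtain ⟨Cr, hCr⟩ := (hr t).2
    have hCr0 : 0 ≤ Cr :=
      le_trans (abs_nonneg _) (hCr (Classical.arbitrary S) (Classical.arbitrary A))
    obtain ⟨D, hD0, hD⟩ := betalog_bound β p hβ hlog t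
    have hPVm : Measurable fun q : S × A => ∫ s', Vpol T P ν β p r (t + 1) s' ∂(P t q) :=
      kernInt_meas (P t) (fun s' => Vpol T P ν β p r (t + 1) s') mV
    have hPVb : ∀ q : S × A, |∫ s', Vpol T P ν β p r (t + 1) s' ∂(P t q)| ≤ CV :=
      fun q => abs_int_le _ _ _ hCV
    have hφm : Measurable fun q : S × A =>
        r t q.1 q.2 + (∫ s', Vpol T P ν β p r (t + 1) s' ∂(P t q))
          - β * Real.log (p t q.1 q.2) :=
      ((hr t).1.add hPVm).sub (((hp.1 t).log).const_mul β)
    have hφb : ∀ q : S × A,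
        |r t q.1 q.2 + (∫ s', Vpol T P ν β p r (t + 1) s' ∂(P t q))
          - β * Real.log (p t q.1 q.2)| ≤ Cr + CV + D := by
      intro q
      have h1 := abs_sub (r t q.1 q.2 + (∫ s', Vpol T P ν β p r (t + 1) s' ∂(P t q)))
        (β * Real.log (p t q.1 q.2))
      calc |_| ≤ |r t q.1 q.2 + (∫ s', Vpol T P ν β p r (t + 1) s' ∂(P t q))|
            + |β * Real.log (p t q.1 q.2)| := abs_sub _ _
        _ ≤ |r t q.1 q.2| + |∫ s', Vpol T P ν β p r (t + 1) s' ∂(P t q)|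
            + |β * Real.log (p t q.1 q.2)| := by
            have := abs_add_le (r t q.1 q.2) (∫ s', Vpol T P ν β p r (t + 1) s' ∂(P t q))
            linarith
        _ ≤ Cr + CV + D := by
            have := hCr q.1 q.2; have := hPVb q; have := hD q.1 q.2; linarith
    constructor
    · have hFm : Measurable fun q : S × A =>
          (r t q.1 q.2 + (∫ s', Vpol T P ν β p r (t + 1) s' ∂(P t q))
            - β * Real.log (p t q.1 q.2)) * p t q.1 q.2 := hφm.mul (hp.1 t)
      have := (hFm.stronglyMeasurable.integral_prod_right' (ν := ν)).measurable
      have he : (fun s => Vpol T P ν β p r t s) = fun s => ∫ a,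
          (r t s a + (∫ s', Vpol T P ν β p r (t + 1) s' ∂(P t (s, a)))
            - β * Real.log (p t s a)) * p t s a ∂ν := funext (vpol_eq T P ν β r p t ht)
      rw [he]
      exact this
    · refine ⟨Cr + CV + D, by linarith, fun s => ?_⟩
      rw [vpol_eq T P ν β r p t ht s]
      exact integral_mul_p_bound ν p hp t s _ (Cr + CV + D)
        ((hφm.comp measurable_prodMk_left).aestronglyMeasurable) (fun a => hφb (s, a))
termination_by T + 1 - t
decreasing_by omega

lemma pvf_meas (hr : IsBddReward r) (hp : IsPolicyDensity ν p)
    (hβ : 0 ≤ β) (hlog : 0 < β → HasBddLogDensity p) (t : ℕ) :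
    Measurable fun q : S × A => ∫ s', Vpol T P ν β p r (t + 1) s' ∂(P t q) :=
  kernInt_meas (P t) _ (vpol_meas_bdd T P ν β r p hr hp hβ hlog (t + 1)).1

lemma pvf_top (q : S × A) : (∫ s', Vpol T P ν β p r (T + 1) s' ∂(P T q)) = 0 := by
  simp [vpol_top T P ν β r p]

lemma qpol_meas_bdd (hr : IsBddReward r) (hp : IsPolicyDensity ν p)
    (hβ : 0 ≤ β) (hlog : 0 < β → HasBddLogDensity p) (t : ℕ) :
    Measurable (fun q : S × A => Qpol T P ν β p r t q.1 q.2) ∧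
      ∃ C, 0 ≤ C ∧ ∀ s a, |Qpol T P ν β p r t s a| ≤ C := by
  obtain ⟨mV, CV, hCV0, hCV⟩ := vpol_meas_bdd T P ν β r p hr hp hβ hlog (t + 1)
  obtain ⟨Cr, hCr⟩ := (hr t).2
  have hCr0 : 0 ≤ Cr :=
    le_trans (abs_nonneg _) (hCr (Classical.arbitrary S) (Classical.arbitrary A))
  have h1 : (fun q : S × A => Qpol T P ν β p r t q.1 q.2)
      = fun q : S × A => r t q.1 q.2 + ∫ s', Vpol T P ν β p r (t + 1) s' ∂(P t q) := by
    funext q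
    rw [IRL.Qpol]
  constructor
  · rw [h1]
    exact (hr t).1.add (pvf_meas T P ν β r p hr hp hβ hlog t)
  · refine ⟨Cr + CV, by linarith, fun s a => ?_⟩
    have h2 : Qpol T P ν β p r t s a
        = r t s a + ∫ s', Vpol T P ν β p r (t + 1) s' ∂(P t (s, a)) := by rw [IRL.Qpol]
    rw [h2]
    have := hCr s a
    have := abs_int_le (P t (s, a)) _ CV hCV
    calc |r t s a + ∫ s', Vpol T P ν β p r (t + 1) s' ∂(P t (s, a))|
        ≤ |r t s a| + |∫ s', Vpol T P ν β p r (t + 1) s' ∂(P t (s, a))| := abs_add_le _ _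
      _ ≤ Cr + CV := by linarith

lemma apol_meas_bdd (hr : IsBddReward r) (hp : IsPolicyDensity ν p)
    (hβ : 0 ≤ β) (hlog : 0 < β → HasBddLogDensity p) (t : ℕ) :
    Measurable (fun q : S × A => Apol T P ν β p r t q.1 q.2) ∧
      ∃ C, 0 ≤ C ∧ ∀ s a, |Apol T P ν β p r t s a| ≤ C := by
  obtain ⟨mQ, CQ, hCQ0, hCQ⟩ := qpol_meas_bdd T P ν β r p hr hp hβ hlog t
  obtain ⟨mV, CV, hCV0, hCV⟩ := vpol_meas_bdd T P ν β r p hr hp hβ hlog t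
  obtain ⟨D, hD0, hD⟩ := betalog_bound β p hβ hlog t
  have h1 : (fun q : S × A => Apol T P ν β p r t q.1 q.2)
      = fun q : S × A => Qpol T P ν β p r t q.1 q.2 - Vpol T P ν β p r t q.1
          - β * Real.log (p t q.1 q.2) := by
    funext q; rw [IRL.Apol]
  constructor
  · rw [h1]
    exact (mQ.sub (mV.comp measurable_fst)).sub (((hp.1 t).log).const_mul β)
  · refine ⟨CQ + CV + D, by linarith, fun s a => ?_⟩
    have h2 : Apol T P ν β p r t s a = Qpol T P ν β p r t s a - Vpol T P ν β p r t s
        - β * Real.log (p t s a) := by rw [IRL.Apol]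
    rw [h2]
    have := hCQ s a; have := hCV s; have := hD s a
    calc |Qpol T P ν β p r t s a - Vpol T P ν β p r t s - β * Real.log (p t s a)|
        ≤ |Qpol T P ν β p r t s a - Vpol T P ν β p r t s| + |β * Real.log (p t s a)| :=
          abs_sub _ _
      _ ≤ |Qpol T P ν β p r t s a| + |Vpol T P ν β p r t s| + |β * Real.log (p t s a)| := by
          have := abs_sub (Qpol T P ν β p r t s a) (Vpol T P ν β p r t s); linarith
      _ ≤ CQ + CV + D := by linarith

lemma apol_int_zero (hr : IsBddReward r) (hp : IsPolicyDensity ν p)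
    (hβ : 0 ≤ β) (hlog : 0 < β → HasBddLogDensity p) (t : ℕ) (ht : ¬ T < t) (s : S) :
    ∫ a, Apol T P ν β p r t s a * p t s a ∂ν = 0 := by
  obtain ⟨mQ, CQ, hCQ0, hCQ⟩ := qpol_meas_bdd T P ν β r p hr hp hβ hlog t
  obtain ⟨D, hD0, hD⟩ := betalog_bound β p hβ hlog t
  have hV : Vpol T P ν β p r t s
      = ∫ a, (Qpol T P ν β p r t s a - β * Real.log (p t s a)) * p t s a ∂ν := by
    rw [vpol_eq T P ν β r p t ht s]
    refine intc _ _ _ (fun a => ?_)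
    rw [IRL.Qpol]
  have h1 : ∀ a, Apol T P ν β p r t s a * p t s a
      = (Qpol T P ν β p r t s a - β * Real.log (p t s a)) * p t s a
        - Vpol T P ν β p r t s * p t s a := by
    intro a; rw [IRL.Apol]; ring
  rw [intc ν _ _ h1]
  have hφm : Measurable fun a => Qpol T P ν β p r t s a - β * Real.log (p t s a) :=
    ((mQ.comp measurable_prodMk_left).sub
      ((((hp.1 t).log).const_mul β).comp measurable_prodMk_left))
  have hint1 : Integrable (fun a => (Qpol T P ν β p r t s a - β * Real.log (p t s a))
      * p t s a) ν := by
    refine (integrable_p ν p hp t s).bdd_mul hφm.aestronglyMeasurable (c := CQ + D) (Filter.Eventually.of_forall fun a => ?_)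
    have := hCQ s a; have := hD s a
    have h := abs_sub (Qpol T P ν β p r t s a) (β * Real.log (p t s a))
    simp only [Real.norm_eq_abs]
    linarith
  have hint2 : Integrable (fun a => Vpol T P ν β p r t s * p t s a) ν :=
    (integrable_p ν p hp t s).const_mul _
  rw [integral_sub hint1 hint2, ← hV, integral_const_mul, hp.2.2 t s, mul_one, sub_self]

end pol
end VarAux
set_option linter.unusedSectionVars false
set_option maxHeartbeats 1000000
namespace VarAux
open IRL
variable {S A : Type*} [MeasurableSpace S] [MeasurableSpace A]
section pol
variable [Nonempty S] [Nonempty A]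
variable (T : ℕ) (P : ℕ → Kernel (S × A) S) [∀ t, IsMarkovKernel (P t)]
variable (ν : Measure A) [IsFiniteMeasure ν]
variable (β : ℝ) (r p : ℕ → S → A → ℝ)

/-- junk trajectory -/
def jk : ℕ → S × A := fun _ => (Classical.arbitrary S, Classical.arbitrary A)

/-- splice two trajectories at time `t` -/
def splice (t : ℕ) (ρ σ : ℕ → S × A) : ℕ → S × A := fun u => if u < t then ρ u else σ u

lemma splice_update (t : ℕ) (ρ σ : ℕ → S × A) (v : S × A) :
    splice t ρ (Function.update σ t v) = splice (t + 1) (Function.update ρ t v) σ := by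
  funext u
  by_cases h1 : u < t
  · have h2 : u ≠ t := by omega
    have h3 : u < t + 1 := by omega
    simp [splice, h1, h2, h3, Function.update_of_ne]
  · by_cases h2 : u = t
    · subst h2
      simp [splice, h1]
    · have h3 : ¬ u < t + 1 := by omega
      simp [splice, h1, h2, h3, Function.update_of_ne]

lemma splice_apply_ge (t u : ℕ) (h : ¬ u < t) (ρ σ : ℕ → S × A) : splice t ρ σ u = σ u := by
  simp [splice, h]

lemma measurable_splice (t : ℕ) :
    Measurable fun q : (ℕ → S × A) × (ℕ → S × A) => splice t q.1 q.2 := by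
  apply measurable_pi_lambda
  intro u
  by_cases h : u < t
  · simp only [splice, h, if_true, if_false]
    exact (measurable_pi_apply u).comp
      (measurable_fst : Measurable fun q : (ℕ → S × A) × (ℕ → S × A) => q.1)
  · simp only [splice, h, if_true, if_false]
    exact (measurable_pi_apply u).comp
      (measurable_snd : Measurable fun q : (ℕ → S × A) × (ℕ → S × A) => q.2)

lemma polExp_congr {t : ℕ} {s : S} (pol : ℕ → Kernel S A) {g h : (ℕ → S × A) → ℝ}
    (he : ∀ τ, g τ = h τ) : polExp T P pol g t s = polExp T P pol h t s := by
  rw [show g = h from funext he]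

lemma polExp_junk (pol : ℕ → Kernel S A) (t : ℕ) (ht : T < t) (g : (ℕ → S × A) → ℝ) (s : S) :
    polExp T P pol g t s = g (jk : ℕ → S × A) := by
  rw [IRL.polExp, if_pos ht]
  rfl

lemma polExp_step (hp : IsPolicyDensity ν p) (t : ℕ) (ht : ¬ T < t)
    (g : (ℕ → S × A) → ℝ) (s : S) :
    polExp T P (densKernel ν p) g t s
      = ∫ a, (∫ s', polExp T P (densKernel ν p)
          (fun τ => g (Function.update τ t (s, a))) (t + 1) s' ∂(P t (s, a))) * p t s a ∂ν := by
  rw [IRL.polExp, if_neg ht, integral_densKernel ν p hp t s]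

lemma polExp_step_splice (hp : IsPolicyDensity ν p) (t : ℕ) (ht : ¬ T < t)
    (g : (ℕ → S × A) → ℝ) (ρ : ℕ → S × A) (s : S) :
    polExp T P (densKernel ν p) (fun σ => g (splice t ρ σ)) t s
      = ∫ a, (∫ s', polExp T P (densKernel ν p)
          (fun σ => g (splice (t + 1) (Function.update ρ t (s, a)) σ)) (t + 1) s'
          ∂(P t (s, a))) * p t s a ∂ν := by
  rw [polExp_step T P ν p hp t ht _ s]
  refine intc _ _ _ (fun a => ?_)
  congr 1
  refine intc _ _ _ (fun s' => ?_)
  refine polExp_congr T P _ (fun τ => ?_)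
  rw [splice_update]

theorem polExp_grand (hp : IsPolicyDensity ν p) (t : ℕ) :
    (∀ (g : (ℕ → S × A) → ℝ) (C : ℝ), Measurable g → (∀ τ, |g τ| ≤ C) →
      Measurable (fun q : (ℕ → S × A) × S =>
          polExp T P (densKernel ν p) (fun σ => g (splice t q.1 σ)) t q.2) ∧
        ∀ ρ s, |polExp T P (densKernel ν p) (fun σ => g (splice t ρ σ)) t s| ≤ C) ∧
    ((∀ (g h : (ℕ → S × A) → ℝ) (Cg Ch : ℝ), Measurable g → (∀ τ, |g τ| ≤ Cg) →
        Measurable h → (∀ τ, |h τ| ≤ Ch) → ∀ ρ s,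
        polExp T P (densKernel ν p) (fun σ => g (splice t ρ σ) + h (splice t ρ σ)) t s
          = polExp T P (densKernel ν p) (fun σ => g (splice t ρ σ)) t s
            + polExp T P (densKernel ν p) (fun σ => h (splice t ρ σ)) t s) ∧
      (∀ (c : ℝ) (g : (ℕ → S × A) → ℝ) (C : ℝ), Measurable g → (∀ τ, |g τ| ≤ C) → ∀ ρ s,
        polExp T P (densKernel ν p) (fun σ => c * g (splice t ρ σ)) t s
          = c * polExp T P (densKernel ν p) (fun σ => g (splice t ρ σ)) t s) ∧
      (∀ (c : ℝ) (s : S), polExp T P (densKernel ν p) (fun _ => c) t s = c)) := by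
  by_cases ht : T < t
  · have he : ∀ (g' : (ℕ → S × A) → ℝ) (s : S),
        polExp T P (densKernel ν p) g' t s = g' (jk : ℕ → S × A) :=
      fun g' s => polExp_junk T P _ t ht g' s
    refine ⟨?_, ?_, ?_, ?_⟩
    · intro g C hg hgb
      constructor
      · simp only [he]
        exact hg.comp ((measurable_splice t).comp (measurable_fst.prodMk measurable_const))
      · intro ρ s
        simp only [he]
        exact hgb _
    · intro g h Cg Ch hg hgb hh hhb ρ s
      simp only [he]
    · intro c g C hg hgb ρ s
      simp only [he]
    · intro c s
      simp only [he]
  · have IH := polExp_grand hp (t + 1)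
    obtain ⟨IH1, IH2, IH3, IH4⟩ := IH
    have hπ : Measurable fun w : ((ℕ → S × A) × S) × A => ((w.1.2, w.2) : S × A) :=
      (measurable_snd.comp measurable_fst).prodMk measurable_snd
    haveI hMk : IsMarkovKernel
        ((P t).comap (fun w : ((ℕ → S × A) × S) × A => ((w.1.2, w.2) : S × A)) hπ) :=
      Kernel.IsMarkovKernel.comap (P t) hπ
    have hmap : Measurable fun z : (((ℕ → S × A) × S) × A) × S =>
        ((Function.update z.1.1.1 t (z.1.1.2, z.1.2), z.2) : (ℕ → S × A) × S) := by
      have hpair : Measurable fun z : (((ℕ → S × A) × S) × A) × S =>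
          ((z.1.1.1, (z.1.1.2, z.1.2)) : (ℕ → S × A) × (S × A)) :=
        ((measurable_fst.comp measurable_fst).comp measurable_fst).prodMk
          (hπ.comp measurable_fst)
      exact ((@measurable_update' ℕ (fun _ : ℕ => S × A) _ t _).comp hpair).prodMk
        measurable_snd
    -- clause 1
    have C1 : ∀ (g : (ℕ → S × A) → ℝ) (C : ℝ), Measurable g → (∀ τ, |g τ| ≤ C) →
        Measurable (fun q : (ℕ → S × A) × S =>
            polExp T P (densKernel ν p) (fun σ => g (splice t q.1 σ)) t q.2) ∧
          ∀ ρ s, |polExp T P (densKernel ν p) (fun σ => g (splice t ρ σ)) t s| ≤ C := by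
      intro g C hg hgb
      obtain ⟨hFm, hFb⟩ := IH1 g C hg hgb
      have hΦm : Measurable fun w : ((ℕ → S × A) × S) × A =>
          ∫ s', polExp T P (densKernel ν p)
            (fun σ => g (splice (t + 1) (Function.update w.1.1 t (w.1.2, w.2)) σ)) (t + 1) s'
            ∂(P t (w.1.2, w.2)) := by
        have := (MeasureTheory.StronglyMeasurable.integral_kernel_prod_right'
          (κ := (P t).comap (fun w : ((ℕ → S × A) × S) × A => ((w.1.2, w.2) : S × A)) hπ)
          ((hFm.comp hmap).stronglyMeasurable)).measurable
        simpa [Kernel.comap_apply] using this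
      have hΦb : ∀ w : ((ℕ → S × A) × S) × A,
          |∫ s', polExp T P (densKernel ν p)
            (fun σ => g (splice (t + 1) (Function.update w.1.1 t (w.1.2, w.2)) σ)) (t + 1) s'
            ∂(P t (w.1.2, w.2))| ≤ C :=
        fun w => abs_int_le _ _ C (fun s' => hFb _ s')
      constructor
      · have hf2m : Measurable fun w : ((ℕ → S × A) × S) × A =>
            (∫ s', polExp T P (densKernel ν p)
              (fun σ => g (splice (t + 1) (Function.update w.1.1 t (w.1.2, w.2)) σ)) (t + 1) s'
              ∂(P t (w.1.2, w.2))) * p t w.1.2 w.2 := hΦm.mul ((hp.1 t).comp hπ)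
        have hmain := (hf2m.stronglyMeasurable.integral_prod_right' (ν := ν)).measurable
        have he : (fun q : (ℕ → S × A) × S =>
            polExp T P (densKernel ν p) (fun σ => g (splice t q.1 σ)) t q.2)
            = fun q : (ℕ → S × A) × S => ∫ a, (∫ s', polExp T P (densKernel ν p)
                (fun σ => g (splice (t + 1) (Function.update q.1 t (q.2, a)) σ)) (t + 1) s'
                ∂(P t (q.2, a))) * p t q.2 a ∂ν := by
          funext q
          rw [polExp_step_splice T P ν p hp t ht g q.1 q.2]
        rw [he]
        exact hmain
      · intro ρ s
        rw [polExp_step_splice T P ν p hp t ht g ρ s]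
        exact integral_mul_p_bound ν p hp t s _ C
          ((hΦm.comp (measurable_prodMk_left (x := (((ρ, s) : (ℕ → S × A) × S))))).aestronglyMeasurable)
          (fun a => hΦb ((ρ, s), a))
    refine ⟨C1, ?_, ?_, ?_⟩
    -- additivity
    · intro g h Cg Ch hg hgb hh hhb ρ s
      rw [polExp_step_splice T P ν p hp t ht g ρ s,
        polExp_step_splice T P ν p hp t ht h ρ s,
        polExp_step_splice T P ν p hp t ht (fun τ => g τ + h τ) ρ s]
      obtain ⟨hFgm, hFgb⟩ := IH1 g Cg hg hgb
      obtain ⟨hFhm, hFhb⟩ := IH1 h Ch hh hhb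
      have key : ∀ (a : A) (s' : S), polExp T P (densKernel ν p)
          (fun σ => (fun τ => g τ + h τ) (splice (t + 1) (Function.update ρ t (s, a)) σ))
          (t + 1) s'
          = polExp T P (densKernel ν p)
              (fun σ => g (splice (t + 1) (Function.update ρ t (s, a)) σ)) (t + 1) s'
            + polExp T P (densKernel ν p)
              (fun σ => h (splice (t + 1) (Function.update ρ t (s, a)) σ)) (t + 1) s' := by
        intro a s'
        exact IH2 g h Cg Ch hg hgb hh hhb (Function.update ρ t (s, a)) s'
      have hIg : ∀ a : A, Integrable (fun s' => polExp T P (densKernel ν p)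
          (fun σ => g (splice (t + 1) (Function.update ρ t (s, a)) σ)) (t + 1) s')
          (P t (s, a)) := by
        intro a
        refine integrable_of_bdd Cg ?_ (fun s' => hFgb _ s')
        exact (hFgm.comp (measurable_prodMk_left (x := Function.update ρ t (s, a)))).aestronglyMeasurable
      have hIh : ∀ a : A, Integrable (fun s' => polExp T P (densKernel ν p)
          (fun σ => h (splice (t + 1) (Function.update ρ t (s, a)) σ)) (t + 1) s')
          (P t (s, a)) := by
        intro a
        refine integrable_of_bdd Ch ?_ (fun s' => hFhb _ s')
        exact (hFhm.comp (measurable_prodMk_left (x := Function.update ρ t (s, a)))).aestronglyMeasurable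
      have key2 : ∀ a : A, (∫ s', polExp T P (densKernel ν p)
          (fun σ => (fun τ => g τ + h τ) (splice (t + 1) (Function.update ρ t (s, a)) σ))
          (t + 1) s' ∂(P t (s, a))) * p t s a
          = (∫ s', polExp T P (densKernel ν p)
              (fun σ => g (splice (t + 1) (Function.update ρ t (s, a)) σ)) (t + 1) s'
              ∂(P t (s, a))) * p t s a
            + (∫ s', polExp T P (densKernel ν p)
              (fun σ => h (splice (t + 1) (Function.update ρ t (s, a)) σ)) (t + 1) s'
              ∂(P t (s, a))) * p t s a := by
        intro a
        rw [intc _ _ _ (key a), integral_add (hIg a) (hIh a), add_mul]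
      rw [intc ν _ _ key2]
      -- joint measurability in a of each piece
      have hΦgm : Measurable fun w : ((ℕ → S × A) × S) × A =>
          ∫ s', polExp T P (densKernel ν p)
            (fun σ => g (splice (t + 1) (Function.update w.1.1 t (w.1.2, w.2)) σ)) (t + 1) s'
            ∂(P t (w.1.2, w.2)) := by
        have := (MeasureTheory.StronglyMeasurable.integral_kernel_prod_right'
          (κ := (P t).comap (fun w : ((ℕ → S × A) × S) × A => ((w.1.2, w.2) : S × A)) hπ)
          ((hFgm.comp hmap).stronglyMeasurable)).measurable
        simpa [Kernel.comap_apply] using this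
      have hΦhm : Measurable fun w : ((ℕ → S × A) × S) × A =>
          ∫ s', polExp T P (densKernel ν p)
            (fun σ => h (splice (t + 1) (Function.update w.1.1 t (w.1.2, w.2)) σ)) (t + 1) s'
            ∂(P t (w.1.2, w.2)) := by
        have := (MeasureTheory.StronglyMeasurable.integral_kernel_prod_right'
          (κ := (P t).comap (fun w : ((ℕ → S × A) × S) × A => ((w.1.2, w.2) : S × A)) hπ)
          ((hFhm.comp hmap).stronglyMeasurable)).measurable
        simpa [Kernel.comap_apply] using this
      have hIg2 : Integrable (fun a => (∫ s', polExp T P (densKernel ν p)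
          (fun σ => g (splice (t + 1) (Function.update ρ t (s, a)) σ)) (t + 1) s'
          ∂(P t (s, a))) * p t s a) ν := by
        refine (integrable_p ν p hp t s).bdd_mul
          ((hΦgm.comp (measurable_prodMk_left (x := (((ρ, s) : (ℕ → S × A) × S))))).aestronglyMeasurable)
          (c := Cg) (Filter.Eventually.of_forall fun a => ?_)
        simpa using abs_int_le (P t (s, a)) _ Cg (fun s' => hFgb _ s')
      have hIh2 : Integrable (fun a => (∫ s', polExp T P (densKernel ν p)
          (fun σ => h (splice (t + 1) (Function.update ρ t (s, a)) σ)) (t + 1) s'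
          ∂(P t (s, a))) * p t s a) ν := by
        refine (integrable_p ν p hp t s).bdd_mul
          ((hΦhm.comp (measurable_prodMk_left (x := (((ρ, s) : (ℕ → S × A) × S))))).aestronglyMeasurable)
          (c := Ch) (Filter.Eventually.of_forall fun a => ?_)
        simpa using abs_int_le (P t (s, a)) _ Ch (fun s' => hFhb _ s')
      exact integral_add hIg2 hIh2
    -- scalar multiplication
    · intro c g C hg hgb ρ s
      rw [polExp_step_splice T P ν p hp t ht g ρ s,
        polExp_step_splice T P ν p hp t ht (fun τ => c * g τ) ρ s]
      have key : ∀ (a : A) (s' : S), polExp T P (densKernel ν p)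
          (fun σ => (fun τ => c * g τ) (splice (t + 1) (Function.update ρ t (s, a)) σ))
          (t + 1) s'
          = c * polExp T P (densKernel ν p)
              (fun σ => g (splice (t + 1) (Function.update ρ t (s, a)) σ)) (t + 1) s' :=
        fun a s' => IH3 c g C hg hgb (Function.update ρ t (s, a)) s'
      have key2 : ∀ a : A, (∫ s', polExp T P (densKernel ν p)
          (fun σ => (fun τ => c * g τ) (splice (t + 1) (Function.update ρ t (s, a)) σ))
          (t + 1) s' ∂(P t (s, a))) * p t s a
          = c * ((∫ s', polExp T P (densKernel ν p)
              (fun σ => g (splice (t + 1) (Function.update ρ t (s, a)) σ)) (t + 1) s'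
              ∂(P t (s, a))) * p t s a) := by
        intro a
        rw [intc _ _ _ (key a), integral_const_mul, mul_assoc]
      rw [intc ν _ _ key2, integral_const_mul]
    -- constants
    · intro c s
      haveI := isProbability_densKernel ν p hp t s
      rw [IRL.polExp, if_neg ht]
      have key : ∀ (a : A) (s' : S), polExp T P (densKernel ν p)
          (fun τ => (fun _ : ℕ → S × A => c) (Function.update τ t (s, a))) (t + 1) s' = c :=
        fun a s' => IH4 c s'
      have key2 : ∀ a : A, (∫ s', polExp T P (densKernel ν p)
          (fun τ => (fun _ : ℕ → S × A => c) (Function.update τ t (s, a))) (t + 1) s'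
          ∂(P t (s, a))) = c := by
        intro a
        rw [intc _ _ _ (key a)]
        simp
      rw [intc _ _ _ key2]
      simp
termination_by T + 1 - t
decreasing_by omega

end pol
end VarAux
set_option linter.unusedSectionVars false
set_option maxHeartbeats 1000000
namespace VarAux
open IRL
variable {S A : Type*} [MeasurableSpace S] [MeasurableSpace A]
section pol
variable [Nonempty S] [Nonempty A]
variable (T : ℕ) (P : ℕ → Kernel (S × A) S) [∀ t, IsMarkovKernel (P t)]
variable (ν : Measure A) [IsFiniteMeasure ν]
variable (β : ℝ) (r p : ℕ → S → A → ℝ)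

lemma polExp_splice_junk (hp : IsPolicyDensity ν p) (t : ℕ) (g : (ℕ → S × A) → ℝ) (s : S) :
    polExp T P (densKernel ν p) g t s
      = polExp T P (densKernel ν p) (fun σ => g (splice t (jk : ℕ → S × A) σ)) t s := by
  by_cases ht : T < t
  · rw [polExp_junk T P _ t ht, polExp_junk T P _ t ht]
    congr 1
    funext u
    by_cases h : u < t <;> simp [splice, jk, h]
  · rw [IRL.polExp, if_neg ht]
    conv_rhs => rw [IRL.polExp, if_neg ht]
    refine intc _ _ _ (fun a => ?_)
    refine intc _ _ _ (fun s' => ?_)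
    have h1 := polExp_splice_junk hp (t + 1) (fun τ => g (Function.update τ t (s, a))) s'
    have h2 := polExp_splice_junk hp (t + 1)
      (fun τ => g (splice t (jk : ℕ → S × A) (Function.update τ t (s, a)))) s'
    rw [h1, h2]
    refine polExp_congr T P _ (fun σ => ?_)
    congr 1
    funext u
    by_cases h1 : u < t
    · have h2 : u ≠ t := by omega
      have h3 : u < t + 1 := by omega
      simp [splice, jk, h1, h2, h3, Function.update_of_ne]
    · by_cases h2 : u = t
      · subst h2
        simp [splice, h1]
      · have h3 : ¬ u < t + 1 := by omega
        simp [splice, h1, h2, h3, Function.update_of_ne]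
termination_by T + 1 - t
decreasing_by all_goals omega

lemma polExp_meas (hp : IsPolicyDensity ν p) (t : ℕ) (g : (ℕ → S × A) → ℝ) (C : ℝ)
    (hg : Measurable g) (hgb : ∀ τ, |g τ| ≤ C) :
    Measurable fun s => polExp T P (densKernel ν p) g t s := by
  have h1 := ((polExp_grand T P ν p hp t).1 g C hg hgb).1
  have he : (fun s => polExp T P (densKernel ν p) g t s)
      = fun s => polExp T P (densKernel ν p)
          (fun σ => g (splice t (jk : ℕ → S × A) σ)) t s :=
    funext (fun s => polExp_splice_junk T P ν p hp t g s)
  rw [he]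
  exact h1.comp (measurable_prodMk_left (x := (jk : ℕ → S × A)))

lemma polExp_bound (hp : IsPolicyDensity ν p) (t : ℕ) (g : (ℕ → S × A) → ℝ) (C : ℝ)
    (hg : Measurable g) (hgb : ∀ τ, |g τ| ≤ C) (s : S) :
    |polExp T P (densKernel ν p) g t s| ≤ C := by
  rw [polExp_splice_junk T P ν p hp t g s]
  exact ((polExp_grand T P ν p hp t).1 g C hg hgb).2 (jk : ℕ → S × A) s

lemma polExp_add (hp : IsPolicyDensity ν p) (t : ℕ) (g h : (ℕ → S × A) → ℝ) (Cg Ch : ℝ)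
    (hg : Measurable g) (hgb : ∀ τ, |g τ| ≤ Cg)
    (hh : Measurable h) (hhb : ∀ τ, |h τ| ≤ Ch) (s : S) :
    polExp T P (densKernel ν p) (fun σ => g σ + h σ) t s
      = polExp T P (densKernel ν p) g t s + polExp T P (densKernel ν p) h t s := by
  rw [polExp_splice_junk T P ν p hp t g s, polExp_splice_junk T P ν p hp t h s,
    polExp_splice_junk T P ν p hp t (fun σ => g σ + h σ) s]
  exact (polExp_grand T P ν p hp t).2.1 g h Cg Ch hg hgb hh hhb (jk : ℕ → S × A) s

lemma polExp_smul (hp : IsPolicyDensity ν p) (t : ℕ) (c : ℝ) (g : (ℕ → S × A) → ℝ) (C : ℝ)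
    (hg : Measurable g) (hgb : ∀ τ, |g τ| ≤ C) (s : S) :
    polExp T P (densKernel ν p) (fun σ => c * g σ) t s
      = c * polExp T P (densKernel ν p) g t s := by
  rw [polExp_splice_junk T P ν p hp t g s, polExp_splice_junk T P ν p hp t (fun σ => c * g σ) s]
  exact (polExp_grand T P ν p hp t).2.2.1 c g C hg hgb (jk : ℕ → S × A) s

lemma polExp_const (hp : IsPolicyDensity ν p) (t : ℕ) (c : ℝ) (s : S) :
    polExp T P (densKernel ν p) (fun _ => c) t s = c :=
  (polExp_grand T P ν p hp t).2.2.2 c s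

lemma polExp_fst (t : ℕ) (ht : ¬ T < t) (pol : ℕ → Kernel S A)
    (g : S → (ℕ → S × A) → ℝ) (s : S) :
    polExp T P pol (fun σ => g (σ t).1 σ) t s
      = polExp T P pol (fun σ => g s σ) t s := by
  rw [IRL.polExp, if_neg ht]
  conv_rhs => rw [IRL.polExp, if_neg ht]
  refine intc _ _ _ (fun a => ?_)
  refine intc _ _ _ (fun s' => ?_)
  refine polExp_congr T P _ (fun τ => ?_)
  simp

end pol
end VarAux
set_option linter.unusedSectionVars false
set_option maxHeartbeats 2000000
namespace VarAux
open IRL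
variable {S A : Type*} [MeasurableSpace S] [MeasurableSpace A]

lemma bdd_sum {X : Type*} (f : ℕ → X → ℝ) (F : Finset ℕ)
    (h : ∀ u ∈ F, ∃ C, 0 ≤ C ∧ ∀ x, |f u x| ≤ C) :
    ∃ C, 0 ≤ C ∧ ∀ x, |∑ u ∈ F, f u x| ≤ C := by
  classical
  revert h
  induction F using Finset.induction_on with
  | empty => exact fun h => ⟨0, le_refl 0, by simp⟩
  | @insert a F' ha ih =>
    intro h
    obtain ⟨C1, hC10, hC1⟩ := h _ (Finset.mem_insert_self _ _)
    obtain ⟨C2, hC20, hC2⟩ := ih (fun u hu => h u (Finset.mem_insert_of_mem hu))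
    refine ⟨C1 + C2, by linarith, fun x => ?_⟩
    rw [Finset.sum_insert ha]
    refine le_trans (abs_add_le _ _) ?_
    have := hC1 x; have := hC2 x; linarith

section pol
variable [Nonempty S] [Nonempty A]
variable (T : ℕ) (P : ℕ → Kernel (S × A) S) [∀ t, IsMarkovKernel (P t)]
variable (ν : Measure A) [IsFiniteMeasure ν]
variable (β : ℝ) (r p : ℕ → S → A → ℝ)

/-- advantage as a trajectory functional -/
def aF (t : ℕ) : (ℕ → S × A) → ℝ := fun τ => Apol T P ν β p r t (τ t).1 (τ t).2

/-- expected next value -/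
def pvF (t : ℕ) : S × A → ℝ := fun q => ∫ s', Vpol T P ν β p r (t + 1) s' ∂(P t q)

/-- dynamics-noise functional -/
def yF (t : ℕ) : (ℕ → S × A) → ℝ := fun τ =>
  Vpol T P ν β p r (t + 1) (τ (t + 1)).1 - pvF T P ν β r p t (τ t)

/-- tail martingale sum -/
def WF (t : ℕ) : (ℕ → S × A) → ℝ := fun τ =>
  ∑ u ∈ Finset.Icc t T, (aF T P ν β r p u τ + yF T P ν β r p u τ)

/-- tail sum of squares -/
def SSq (t : ℕ) : (ℕ → S × A) → ℝ := fun τ =>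
  ∑ u ∈ Finset.Icc t T, ((aF T P ν β r p u τ) ^ 2 + (yF T P ν β r p u τ) ^ 2)

lemma aF_meas_bdd (hr : IsBddReward r) (hp : IsPolicyDensity ν p)
    (hβ : 0 ≤ β) (hlog : 0 < β → HasBddLogDensity p) (t : ℕ) :
    Measurable (aF T P ν β r p t) ∧ ∃ C, 0 ≤ C ∧ ∀ τ, |aF T P ν β r p t τ| ≤ C := by
  obtain ⟨mA, CA, hCA0, hCA⟩ := apol_meas_bdd T P ν β r p hr hp hβ hlog t
  exact ⟨mA.comp (measurable_pi_apply t), CA, hCA0, fun τ => hCA _ _⟩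

lemma pvF_bdd (hr : IsBddReward r) (hp : IsPolicyDensity ν p)
    (hβ : 0 ≤ β) (hlog : 0 < β → HasBddLogDensity p) (t : ℕ) :
    ∃ C, 0 ≤ C ∧ (∀ s, |Vpol T P ν β p r (t + 1) s| ≤ C) ∧
      ∀ q, |pvF T P ν β r p t q| ≤ C := by
  obtain ⟨mV, CV, hCV0, hCV⟩ := vpol_meas_bdd T P ν β r p hr hp hβ hlog (t + 1)
  exact ⟨CV, hCV0, hCV, fun q => abs_int_le _ _ _ hCV⟩

lemma yF_meas_bdd (hr : IsBddReward r) (hp : IsPolicyDensity ν p)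
    (hβ : 0 ≤ β) (hlog : 0 < β → HasBddLogDensity p) (t : ℕ) :
    Measurable (yF T P ν β r p t) ∧ ∃ C, 0 ≤ C ∧ ∀ τ, |yF T P ν β r p t τ| ≤ C := by
  obtain ⟨mV, CV, hCV0, hCV⟩ := vpol_meas_bdd T P ν β r p hr hp hβ hlog (t + 1)
  refine ⟨?_, CV + CV, by linarith, fun τ => ?_⟩
  · exact ((mV.comp (measurable_fst.comp (measurable_pi_apply (t + 1))))).sub
      ((pvf_meas T P ν β r p hr hp hβ hlog t).comp (measurable_pi_apply t))
  · have h1 := hCV (τ (t + 1)).1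
    have h2 : |pvF T P ν β r p t (τ t)| ≤ CV := abs_int_le _ _ _ hCV
    calc |Vpol T P ν β p r (t + 1) (τ (t + 1)).1 - pvF T P ν β r p t (τ t)|
        ≤ |Vpol T P ν β p r (t + 1) (τ (t + 1)).1| + |pvF T P ν β r p t (τ t)| := abs_sub _ _
      _ ≤ CV + CV := by linarith

lemma WF_meas_bdd (hr : IsBddReward r) (hp : IsPolicyDensity ν p)
    (hβ : 0 ≤ β) (hlog : 0 < β → HasBddLogDensity p) (t : ℕ) :
    Measurable (WF T P ν β r p t) ∧ ∃ C, 0 ≤ C ∧ ∀ τ, |WF T P ν β r p t τ| ≤ C := by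
  constructor
  · refine Finset.measurable_sum _ (fun u _ => ?_)
    exact ((aF_meas_bdd T P ν β r p hr hp hβ hlog u).1).add
      ((yF_meas_bdd T P ν β r p hr hp hβ hlog u).1)
  · refine bdd_sum _ _ (fun u _ => ?_)
    obtain ⟨Ca, hCa0, hCa⟩ := (aF_meas_bdd T P ν β r p hr hp hβ hlog u).2
    obtain ⟨Cy, hCy0, hCy⟩ := (yF_meas_bdd T P ν β r p hr hp hβ hlog u).2
    refine ⟨Ca + Cy, by linarith, fun τ => ?_⟩
    refine le_trans (abs_add_le _ _) ?_
    have := hCa τ; have := hCy τ; linarith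

lemma SSq_meas_bdd (hr : IsBddReward r) (hp : IsPolicyDensity ν p)
    (hβ : 0 ≤ β) (hlog : 0 < β → HasBddLogDensity p) (t : ℕ) :
    Measurable (SSq T P ν β r p t) ∧ ∃ C, 0 ≤ C ∧ ∀ τ, |SSq T P ν β r p t τ| ≤ C := by
  constructor
  · refine Finset.measurable_sum _ (fun u _ => ?_)
    exact (((aF_meas_bdd T P ν β r p hr hp hβ hlog u).1).pow measurable_const).add
      (((yF_meas_bdd T P ν β r p hr hp hβ hlog u).1).pow measurable_const)
  · refine bdd_sum _ _ (fun u _ => ?_)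
    obtain ⟨Ca, hCa0, hCa⟩ := (aF_meas_bdd T P ν β r p hr hp hβ hlog u).2
    obtain ⟨Cy, hCy0, hCy⟩ := (yF_meas_bdd T P ν β r p hr hp hβ hlog u).2
    refine ⟨Ca ^ 2 + Cy ^ 2, by positivity, fun τ => ?_⟩
    have h1 : (aF T P ν β r p u τ) ^ 2 ≤ Ca ^ 2 := by
      nlinarith [hCa τ, abs_nonneg (aF T P ν β r p u τ), sq_abs (aF T P ν β r p u τ)]
    have h2 : (yF T P ν β r p u τ) ^ 2 ≤ Cy ^ 2 := by
      nlinarith [hCy τ, abs_nonneg (yF T P ν β r p u τ), sq_abs (yF T P ν β r p u τ)]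
    have h3 : (0:ℝ) ≤ (aF T P ν β r p u τ) ^ 2 + (yF T P ν β r p u τ) ^ 2 := by positivity
    rw [abs_of_nonneg h3]
    linarith

lemma sum_Icc_split (t : ℕ) (ht : ¬ T < t) (f : ℕ → ℝ) :
    ∑ u ∈ Finset.Icc t T, f u = f t + ∑ u ∈ Finset.Icc (t + 1) T, f u := by
  rw [Finset.Icc_eq_cons_Ioc (le_of_not_gt ht), Finset.sum_cons, ← Finset.Icc_add_one_left_eq_Ioc]

lemma WF_update (t : ℕ) (ht : ¬ T < t) (s : S) (a : A) (τ : ℕ → S × A) :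
    WF T P ν β r p t (Function.update τ t (s, a))
      = (Apol T P ν β p r t s a - pvF T P ν β r p t (s, a))
        + (Vpol T P ν β p r (t + 1) (τ (t + 1)).1 + WF T P ν β r p (t + 1) τ) := by
  show (∑ u ∈ Finset.Icc t T, _) = _
  rw [sum_Icc_split T t ht]
  have htail : ∑ u ∈ Finset.Icc (t + 1) T,
      (aF T P ν β r p u (Function.update τ t (s, a)) + yF T P ν β r p u (Function.update τ t (s, a)))
      = WF T P ν β r p (t + 1) τ := by
    refine Finset.sum_congr rfl (fun u hu => ?_)
    have hu1 : t + 1 ≤ u := (Finset.mem_Icc.mp hu).1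
    have h1 : u ≠ t := by omega
    have h2 : u + 1 ≠ t := by omega
    simp [aF, yF, Function.update_of_ne h1, Function.update_of_ne h2]
  rw [htail]
  have ha : aF T P ν β r p t (Function.update τ t (s, a)) = Apol T P ν β p r t s a := by
    simp [aF]
  have hy : yF T P ν β r p t (Function.update τ t (s, a))
      = Vpol T P ν β p r (t + 1) (τ (t + 1)).1 - pvF T P ν β r p t (s, a) := by
    have h2 : t + 1 ≠ t := by omega
    simp [yF, Function.update_of_ne h2]
  rw [ha, hy]
  ring

lemma SSq_update (t : ℕ) (ht : ¬ T < t) (s : S) (a : A) (τ : ℕ → S × A) :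
    SSq T P ν β r p t (Function.update τ t (s, a))
      = ((Apol T P ν β p r t s a) ^ 2
          + (Vpol T P ν β p r (t + 1) (τ (t + 1)).1 - pvF T P ν β r p t (s, a)) ^ 2)
        + SSq T P ν β r p (t + 1) τ := by
  show (∑ u ∈ Finset.Icc t T, _) = _
  rw [sum_Icc_split T t ht]
  have htail : ∑ u ∈ Finset.Icc (t + 1) T,
      ((aF T P ν β r p u (Function.update τ t (s, a))) ^ 2
        + (yF T P ν β r p u (Function.update τ t (s, a))) ^ 2)
      = SSq T P ν β r p (t + 1) τ := by
    refine Finset.sum_congr rfl (fun u hu => ?_)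
    have hu1 : t + 1 ≤ u := (Finset.mem_Icc.mp hu).1
    have h1 : u ≠ t := by omega
    have h2 : u + 1 ≠ t := by omega
    simp [aF, yF, Function.update_of_ne h1, Function.update_of_ne h2]
  rw [htail]
  have ha : aF T P ν β r p t (Function.update τ t (s, a)) = Apol T P ν β p r t s a := by
    simp [aF]
  have hy : yF T P ν β r p t (Function.update τ t (s, a))
      = Vpol T P ν β p r (t + 1) (τ (t + 1)).1 - pvF T P ν β r p t (s, a) := by
    have h2 : t + 1 ≠ t := by omega
    simp [yF, Function.update_of_ne h2]
  rw [ha, hy]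

lemma polExp_fst' (t : ℕ) (ht : ¬ T < t) (pol : ℕ → Kernel S A)
    (g : S → (ℕ → S × A) → ℝ) (s : S) (g1 g2 : (ℕ → S × A) → ℝ)
    (h1 : ∀ σ, g1 σ = g (σ t).1 σ) (h2 : ∀ σ, g2 σ = g s σ) :
    polExp T P pol g1 t s = polExp T P pol g2 t s := by
  rw [polExp_congr T P pol h1, polExp_congr T P pol h2]
  exact polExp_fst T P t ht pol g s

end pol
end VarAux
set_option linter.unusedSectionVars false
set_option maxHeartbeats 4000000
namespace VarAux
open IRL
variable {S A : Type*} [MeasurableSpace S] [MeasurableSpace A]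
section pol
variable [Nonempty S] [Nonempty A]
variable (T : ℕ) (P : ℕ → Kernel (S × A) S) [∀ t, IsMarkovKernel (P t)]
variable (ν : Measure A) [IsFiniteMeasure ν]
variable (β : ℝ) (r p : ℕ → S → A → ℝ)

theorem polExp_H (hr : IsBddReward r) (hp : IsPolicyDensity ν p)
    (hβ : 0 ≤ β) (hlog : 0 < β → HasBddLogDensity p) (t : ℕ) :
    (∀ s, polExp T P (densKernel ν p) (WF T P ν β r p t) t s = 0) ∧
    (∀ s, polExp T P (densKernel ν p) (fun τ => (WF T P ν β r p t τ) ^ 2) t s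
        = polExp T P (densKernel ν p) (SSq T P ν β r p t) t s) := by
  by_cases ht : T < t
  · have hempty : Finset.Icc t T = ∅ := Finset.Icc_eq_empty (by omega)
    constructor
    · intro s
      rw [polExp_junk T P _ t ht]
      simp [WF, hempty]
    · intro s
      rw [polExp_junk T P _ t ht, polExp_junk T P _ t ht]
      simp [WF, SSq, hempty]
  · obtain ⟨IH1, IH2⟩ := polExp_H hr hp hβ hlog (t + 1)
    obtain ⟨mV, CV, hCV0, hCV⟩ := vpol_meas_bdd T P ν β r p hr hp hβ hlog (t + 1)
    obtain ⟨mW, CW, hCW0, hCW⟩ := WF_meas_bdd T P ν β r p hr hp hβ hlog (t + 1)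
    obtain ⟨mS, CS, hCS0, hCS⟩ := SSq_meas_bdd T P ν β r p hr hp hβ hlog (t + 1)
    have hEm : Measurable fun s' =>
        polExp T P (densKernel ν p) (SSq T P ν β r p (t + 1)) (t + 1) s' :=
      polExp_meas T P ν p hp (t + 1) _ CS mS hCS
    have hEb : ∀ s',
        |polExp T P (densKernel ν p) (SSq T P ν β r p (t + 1)) (t + 1) s'| ≤ CS :=
      fun s' => polExp_bound T P ν p hp (t + 1) _ CS mS hCS s'
    have hVfm : Measurable fun τ : ℕ → S × A => Vpol T P ν β p r (t + 1) (τ (t + 1)).1 :=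
      mV.comp (measurable_fst.comp (measurable_pi_apply (t + 1)))
    have hVfb : ∀ τ : ℕ → S × A, |Vpol T P ν β p r (t + 1) (τ (t + 1)).1| ≤ CV :=
      fun τ => hCV _
    -- inner value for the linear functional
    have hL1 : ∀ (s : S) (a : A) (s' : S),
        polExp T P (densKernel ν p)
          (fun τ => WF T P ν β r p t (Function.update τ t (s, a))) (t + 1) s'
        = (Apol T P ν β p r t s a - pvF T P ν β r p t (s, a))
            + Vpol T P ν β p r (t + 1) s' := by
      intro s a s'
      rw [polExp_congr T P _ (WF_update T P ν β r p t ht s a)]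
      by_cases ht1 : T < t + 1
      · have hTt : T = t := by omega
        rw [polExp_junk T P _ (t + 1) ht1]
        have hIcc : Finset.Icc (t + 1) T = ∅ := Finset.Icc_eq_empty (by omega)
        have h1 : ∀ x : S, Vpol T P ν β p r (t + 1) x = 0 := by
          intro x
          have := vpol_top T P ν β r p x
          rw [show T + 1 = t + 1 by omega] at this
          exact this
        simp [WF, hIcc, h1]
      · have hstep := polExp_fst' T P (t + 1) ht1 (densKernel ν p)
          (fun x σ => (Apol T P ν β p r t s a - pvF T P ν β r p t (s, a))
            + (Vpol T P ν β p r (t + 1) x + WF T P ν β r p (t + 1) σ)) s'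
          (fun τ => (Apol T P ν β p r t s a - pvF T P ν β r p t (s, a))
            + (Vpol T P ν β p r (t + 1) (τ (t + 1)).1 + WF T P ν β r p (t + 1) τ))
          (fun τ => (Apol T P ν β p r t s a - pvF T P ν β r p t (s, a))
            + (Vpol T P ν β p r (t + 1) s' + WF T P ν β r p (t + 1) τ))
          (fun σ => rfl) (fun σ => rfl)
        rw [hstep]
        have hre : ∀ τ, (Apol T P ν β p r t s a - pvF T P ν β r p t (s, a))
            + (Vpol T P ν β p r (t + 1) s' + WF T P ν β r p (t + 1) τ)
            = ((Apol T P ν β p r t s a - pvF T P ν β r p t (s, a))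
                + Vpol T P ν β p r (t + 1) s') + WF T P ν β r p (t + 1) τ :=
          fun τ => by ring
        rw [polExp_congr T P _ hre]
        rw [polExp_add T P ν p hp (t + 1)
          (fun _ => (Apol T P ν β p r t s a - pvF T P ν β r p t (s, a))
            + Vpol T P ν β p r (t + 1) s') (WF T P ν β r p (t + 1))
          (|(Apol T P ν β p r t s a - pvF T P ν β r p t (s, a))
            + Vpol T P ν β p r (t + 1) s'|) CW
          measurable_const (fun τ => le_refl _) mW hCW s']
        rw [polExp_const T P ν p hp (t + 1) _ s', IH1 s', add_zero]
    -- inner value for the squared functional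
    have hL2 : ∀ (s : S) (a : A) (s' : S),
        polExp T P (densKernel ν p)
          (fun τ => (WF T P ν β r p t (Function.update τ t (s, a))) ^ 2) (t + 1) s'
        = ((Apol T P ν β p r t s a - pvF T P ν β r p t (s, a))
            + Vpol T P ν β p r (t + 1) s') ^ 2
          + polExp T P (densKernel ν p) (SSq T P ν β r p (t + 1)) (t + 1) s' := by
      intro s a s'
      have hsq : ∀ τ, (WF T P ν β r p t (Function.update τ t (s, a))) ^ 2
          = ((Apol T P ν β p r t s a - pvF T P ν β r p t (s, a))
              + (Vpol T P ν β p r (t + 1) (τ (t + 1)).1 + WF T P ν β r p (t + 1) τ)) ^ 2 :=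
        fun τ => by rw [WF_update T P ν β r p t ht s a τ]
      rw [polExp_congr T P _ hsq]
      by_cases ht1 : T < t + 1
      · rw [polExp_junk T P _ (t + 1) ht1, polExp_junk T P _ (t + 1) ht1]
        have hIcc : Finset.Icc (t + 1) T = ∅ := Finset.Icc_eq_empty (by omega)
        have hTt : T = t := by omega
        have h1 : ∀ x : S, Vpol T P ν β p r (t + 1) x = 0 := by
          intro x
          have := vpol_top T P ν β r p x
          rw [show T + 1 = t + 1 by omega] at this
          exact this
        simp [WF, SSq, hIcc, h1]
      · have hstep := polExp_fst' T P (t + 1) ht1 (densKernel ν p)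
          (fun x σ => ((Apol T P ν β p r t s a - pvF T P ν β r p t (s, a))
            + (Vpol T P ν β p r (t + 1) x + WF T P ν β r p (t + 1) σ)) ^ 2) s'
          (fun τ => ((Apol T P ν β p r t s a - pvF T P ν β r p t (s, a))
            + (Vpol T P ν β p r (t + 1) (τ (t + 1)).1 + WF T P ν β r p (t + 1) τ)) ^ 2)
          (fun τ => ((Apol T P ν β p r t s a - pvF T P ν β r p t (s, a))
            + (Vpol T P ν β p r (t + 1) s' + WF T P ν β r p (t + 1) τ)) ^ 2)
          (fun σ => rfl) (fun σ => rfl)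
        rw [hstep]
        have hexp : ∀ τ, ((Apol T P ν β p r t s a - pvF T P ν β r p t (s, a))
            + (Vpol T P ν β p r (t + 1) s' + WF T P ν β r p (t + 1) τ)) ^ 2
            = ((Apol T P ν β p r t s a - pvF T P ν β r p t (s, a))
                + Vpol T P ν β p r (t + 1) s') ^ 2
              + ((2 * ((Apol T P ν β p r t s a - pvF T P ν β r p t (s, a))
                  + Vpol T P ν β p r (t + 1) s')) * WF T P ν β r p (t + 1) τ
                + (WF T P ν β r p (t + 1) τ) ^ 2) := fun τ => by ring
        rw [polExp_congr T P _ hexp]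
        have hsqm : Measurable fun σ : ℕ → S × A => (WF T P ν β r p (t + 1) σ) ^ 2 :=
          mW.pow measurable_const
        have hsqb : ∀ τ, |(WF T P ν β r p (t + 1) τ) ^ 2| ≤ CW ^ 2 := by
          intro τ
          rw [abs_pow]
          exact pow_le_pow_left₀ (abs_nonneg _) (hCW τ) 2
        have hrestm : Measurable fun τ : ℕ → S × A =>
            (2 * ((Apol T P ν β p r t s a - pvF T P ν β r p t (s, a))
              + Vpol T P ν β p r (t + 1) s')) * WF T P ν β r p (t + 1) τ
            + (WF T P ν β r p (t + 1) τ) ^ 2 := (mW.const_mul _).add hsqm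
        have hrestb : ∀ τ, |(2 * ((Apol T P ν β p r t s a - pvF T P ν β r p t (s, a))
              + Vpol T P ν β p r (t + 1) s')) * WF T P ν β r p (t + 1) τ
            + (WF T P ν β r p (t + 1) τ) ^ 2|
            ≤ |2 * ((Apol T P ν β p r t s a - pvF T P ν β r p t (s, a))
              + Vpol T P ν β p r (t + 1) s')| * CW + CW ^ 2 := by
          intro τ
          refine le_trans (abs_add_le _ _) ?_
          have h1 : |(2 * ((Apol T P ν β p r t s a - pvF T P ν β r p t (s, a))
              + Vpol T P ν β p r (t + 1) s')) * WF T P ν β r p (t + 1) τ|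
              ≤ |2 * ((Apol T P ν β p r t s a - pvF T P ν β r p t (s, a))
                + Vpol T P ν β p r (t + 1) s')| * CW := by
            rw [abs_mul]
            exact mul_le_mul_of_nonneg_left (hCW τ) (abs_nonneg _)
          have h2 := hsqb τ
          linarith
        rw [polExp_add T P ν p hp (t + 1)
          (fun _ => ((Apol T P ν β p r t s a - pvF T P ν β r p t (s, a))
            + Vpol T P ν β p r (t + 1) s') ^ 2)
          (fun τ => (2 * ((Apol T P ν β p r t s a - pvF T P ν β r p t (s, a))
              + Vpol T P ν β p r (t + 1) s')) * WF T P ν β r p (t + 1) τ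
            + (WF T P ν β r p (t + 1) τ) ^ 2)
          (|((Apol T P ν β p r t s a - pvF T P ν β r p t (s, a))
            + Vpol T P ν β p r (t + 1) s') ^ 2|)
          (|2 * ((Apol T P ν β p r t s a - pvF T P ν β r p t (s, a))
            + Vpol T P ν β p r (t + 1) s')| * CW + CW ^ 2)
          measurable_const (fun τ => le_refl _) hrestm hrestb s']
        rw [polExp_const T P ν p hp (t + 1) _ s']
        rw [polExp_add T P ν p hp (t + 1)
          (fun τ => (2 * ((Apol T P ν β p r t s a - pvF T P ν β r p t (s, a))
            + Vpol T P ν β p r (t + 1) s')) * WF T P ν β r p (t + 1) τ)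
          (fun τ => (WF T P ν β r p (t + 1) τ) ^ 2)
          (|2 * ((Apol T P ν β p r t s a - pvF T P ν β r p t (s, a))
            + Vpol T P ν β p r (t + 1) s')| * CW) (CW ^ 2)
          (mW.const_mul _) (fun τ => by
            rw [abs_mul]
            exact mul_le_mul_of_nonneg_left (hCW τ) (abs_nonneg _)) hsqm hsqb s']
        rw [polExp_smul T P ν p hp (t + 1) _ (WF T P ν β r p (t + 1)) CW mW hCW s']
        rw [IH1 s', IH2 s']
        ring
    -- inner value for SSq
    have hR2 : ∀ (s : S) (a : A) (s' : S),
        polExp T P (densKernel ν p)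
          (fun τ => SSq T P ν β r p t (Function.update τ t (s, a))) (t + 1) s'
        = ((Apol T P ν β p r t s a) ^ 2
            + (Vpol T P ν β p r (t + 1) s' - pvF T P ν β r p t (s, a)) ^ 2)
          + polExp T P (densKernel ν p) (SSq T P ν β r p (t + 1)) (t + 1) s' := by
      intro s a s'
      rw [polExp_congr T P _ (SSq_update T P ν β r p t ht s a)]
      by_cases ht1 : T < t + 1
      · rw [polExp_junk T P _ (t + 1) ht1, polExp_junk T P _ (t + 1) ht1]
        have hIcc : Finset.Icc (t + 1) T = ∅ := Finset.Icc_eq_empty (by omega)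
        have hTt : T = t := by omega
        have h1 : ∀ x : S, Vpol T P ν β p r (t + 1) x = 0 := by
          intro x
          have := vpol_top T P ν β r p x
          rw [show T + 1 = t + 1 by omega] at this
          exact this
        simp [SSq, hIcc, h1]
      · have hstep := polExp_fst' T P (t + 1) ht1 (densKernel ν p)
          (fun x σ => ((Apol T P ν β p r t s a) ^ 2
            + (Vpol T P ν β p r (t + 1) x - pvF T P ν β r p t (s, a)) ^ 2)
            + SSq T P ν β r p (t + 1) σ) s'
          (fun τ => ((Apol T P ν β p r t s a) ^ 2
            + (Vpol T P ν β p r (t + 1) (τ (t + 1)).1 - pvF T P ν β r p t (s, a)) ^ 2)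
            + SSq T P ν β r p (t + 1) τ)
          (fun τ => ((Apol T P ν β p r t s a) ^ 2
            + (Vpol T P ν β p r (t + 1) s' - pvF T P ν β r p t (s, a)) ^ 2)
            + SSq T P ν β r p (t + 1) τ)
          (fun σ => rfl) (fun σ => rfl)
        rw [hstep]
        rw [polExp_add T P ν p hp (t + 1)
          (fun _ => ((Apol T P ν β p r t s a) ^ 2
            + (Vpol T P ν β p r (t + 1) s' - pvF T P ν β r p t (s, a)) ^ 2))
          (SSq T P ν β r p (t + 1))
          (|((Apol T P ν β p r t s a) ^ 2
            + (Vpol T P ν β p r (t + 1) s' - pvF T P ν β r p t (s, a)) ^ 2)|) CS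
          measurable_const (fun τ => le_refl _) mS hCS s']
        rw [polExp_const T P ν p hp (t + 1) _ s']
    constructor
    -- H1
    · intro s
      rw [polExp_step T P ν p hp t ht (WF T P ν β r p t) s]
      have key : ∀ a : A, (∫ s', polExp T P (densKernel ν p)
          (fun τ => WF T P ν β r p t (Function.update τ t (s, a))) (t + 1) s'
          ∂(P t (s, a))) * p t s a
          = Apol T P ν β p r t s a * p t s a := by
        intro a
        have hIV : Integrable (fun s' => Vpol T P ν β p r (t + 1) s') (P t (s, a)) :=
          integrable_of_bdd CV mV.aestronglyMeasurable hCV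
        rw [intc _ _ _ (hL1 s a), integral_add (integrable_const _) hIV, integral_const]
        have hpv : (∫ s', Vpol T P ν β p r (t + 1) s' ∂(P t (s, a)))
            = pvF T P ν β r p t (s, a) := rfl
        rw [hpv]
        simp
      rw [intc ν _ _ key]
      exact apol_int_zero T P ν β r p hr hp hβ hlog t ht s
    -- H2
    · intro s
      rw [polExp_step T P ν p hp t ht (fun τ => (WF T P ν β r p t τ) ^ 2) s,
        polExp_step T P ν p hp t ht (SSq T P ν β r p t) s]
      refine intc _ _ _ (fun a => ?_)
      congr 1
      have hbeta : ∀ s', polExp T P (densKernel ν p)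
          (fun τ => (fun τ' => (WF T P ν β r p t τ') ^ 2) (Function.update τ t (s, a)))
          (t + 1) s'
          = polExp T P (densKernel ν p)
            (fun τ => (WF T P ν β r p t (Function.update τ t (s, a))) ^ 2) (t + 1) s' :=
        fun s' => polExp_congr T P _ (fun τ => rfl)
      rw [intc _ _ _ hbeta, intc _ _ _ (hL2 s a), intc _ _ _ (hR2 s a)]
      have hIV : Integrable (fun s' => Vpol T P ν β p r (t + 1) s') (P t (s, a)) :=
        integrable_of_bdd CV mV.aestronglyMeasurable hCV
      have hpvb : |pvF T P ν β r p t (s, a)| ≤ CV := abs_int_le _ _ _ hCV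
      have hRm : Measurable fun s' => ((Apol T P ν β p r t s a) ^ 2
          + (Vpol T P ν β p r (t + 1) s' - pvF T P ν β r p t (s, a)) ^ 2)
          + polExp T P (densKernel ν p) (SSq T P ν β r p (t + 1)) (t + 1) s' :=
        (measurable_const.add ((mV.sub measurable_const).pow measurable_const)).add hEm
      have hRb : ∀ s', |((Apol T P ν β p r t s a) ^ 2
          + (Vpol T P ν β p r (t + 1) s' - pvF T P ν β r p t (s, a)) ^ 2)
          + polExp T P (densKernel ν p) (SSq T P ν β r p (t + 1)) (t + 1) s'|
          ≤ ((Apol T P ν β p r t s a) ^ 2 + (CV + CV) ^ 2) + CS := by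
        intro s'
        have h1 : |Vpol T P ν β p r (t + 1) s' - pvF T P ν β r p t (s, a)| ≤ CV + CV := by
          have := hCV s'
          calc |Vpol T P ν β p r (t + 1) s' - pvF T P ν β r p t (s, a)|
              ≤ |Vpol T P ν β p r (t + 1) s'| + |pvF T P ν β r p t (s, a)| := abs_sub _ _
            _ ≤ CV + CV := by linarith
        have h2 : (Vpol T P ν β p r (t + 1) s' - pvF T P ν β r p t (s, a)) ^ 2
            ≤ (CV + CV) ^ 2 := by
          nlinarith [sq_abs (Vpol T P ν β p r (t + 1) s' - pvF T P ν β r p t (s, a)),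
            abs_nonneg (Vpol T P ν β p r (t + 1) s' - pvF T P ν β r p t (s, a))]
        have h3 := hEb s'
        have h4 : (0:ℝ) ≤ (Apol T P ν β p r t s a) ^ 2
            + (Vpol T P ν β p r (t + 1) s' - pvF T P ν β r p t (s, a)) ^ 2 := by positivity
        refine le_trans (abs_add_le _ _) ?_
        rw [abs_of_nonneg h4]
        linarith
      have hRint : Integrable (fun s' => ((Apol T P ν β p r t s a) ^ 2
          + (Vpol T P ν β p r (t + 1) s' - pvF T P ν β r p t (s, a)) ^ 2)
          + polExp T P (densKernel ν p) (SSq T P ν β r p (t + 1)) (t + 1) s') (P t (s, a)) :=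
        integrable_of_bdd _ hRm.aestronglyMeasurable hRb
      have hcrossint : Integrable (fun s' => (2 * Apol T P ν β p r t s a)
          * (Vpol T P ν β p r (t + 1) s' - pvF T P ν β r p t (s, a))) (P t (s, a)) :=
        (hIV.sub (integrable_const _)).const_mul _
      have hdiff : ∀ s', ((Apol T P ν β p r t s a - pvF T P ν β r p t (s, a))
          + Vpol T P ν β p r (t + 1) s') ^ 2
          + polExp T P (densKernel ν p) (SSq T P ν β r p (t + 1)) (t + 1) s'
          = (((Apol T P ν β p r t s a) ^ 2
              + (Vpol T P ν β p r (t + 1) s' - pvF T P ν β r p t (s, a)) ^ 2)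
            + polExp T P (densKernel ν p) (SSq T P ν β r p (t + 1)) (t + 1) s')
            + (2 * Apol T P ν β p r t s a)
              * (Vpol T P ν β p r (t + 1) s' - pvF T P ν β r p t (s, a)) :=
        fun s' => by ring
      rw [intc _ _ _ hdiff, integral_add hRint hcrossint, integral_const_mul,
        integral_sub hIV (integrable_const _), integral_const]
      have hpv : (∫ s', Vpol T P ν β p r (t + 1) s' ∂(P t (s, a)))
          = pvF T P ν β r p t (s, a) := rfl
      rw [hpv]
      simp
termination_by T + 1 - t
decreasing_by all_goals omega

end pol
end VarAux
set_option linter.unusedSectionVars false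
set_option maxHeartbeats 4000000
open VarAux IRL

/-- **Variance decomposition of the regularized return**
(Corollary `variance_return_decomp`). For `β ≥ 0`, a bounded measurable reward `r` and a
Markov policy `π` with `ν`-densities (bounded log-densities when `β > 0`), the variance of
the regularized return under `P^π` splits into an action-variance and a dynamics-variance
term. -/
theorem variance_return_decomposition
    {S A : Type*} [MeasurableSpace S] [MeasurableSpace A] [Nonempty S] [Nonempty A]
    (T : ℕ) (hT : 1 ≤ T)
    (P0 : Measure S) [IsProbabilityMeasure P0]
    (P : ℕ → Kernel (S × A) S) [∀ t, IsMarkovKernel (P t)]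
    (ν : Measure A) [IsFiniteMeasure ν] (hν : ν Set.univ ≠ 0)
    (β : ℝ) (hβ : 0 ≤ β)
    (r : ℕ → S → A → ℝ) (hr : IRL.IsBddReward r)
    (p : ℕ → S → A → ℝ) (hp : IRL.IsPolicyDensity ν p)
    (hlog : 0 < β → IRL.HasBddLogDensity p)
    (Ppi : Measure (ℕ → S × A)) (hPpi : IRL.IsTrajLaw T P P0 (IRL.densKernel ν p) Ppi)
    (G : (ℕ → S × A) → ℝ)
    (hG : G = fun τ => ∑ t ∈ Finset.Icc 1 T,
      (r t (τ t).1 (τ t).2 - β * Real.log (p t (τ t).1 (τ t).2)))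
    (Y : ℕ → (ℕ → S × A) → ℝ)
    (hY : Y = fun t τ =>
      if t = 0 then IRL.Vpol T P ν β p r 1 (τ 1).1 - ∫ s, IRL.Vpol T P ν β p r 1 s ∂P0
      else IRL.Vpol T P ν β p r (t + 1) (τ (t + 1)).1
        - ∫ s', IRL.Vpol T P ν β p r (t + 1) s' ∂(P t ((τ t).1, (τ t).2))) :
    variance G Ppi
      = (∑ t ∈ Finset.Icc 1 T,
          ∫ τ, (IRL.Apol T P ν β p r t (τ t).1 (τ t).2) ^ 2 ∂Ppi)
        + ∑ t ∈ Finset.range T, ∫ τ, (Y t τ) ^ 2 ∂Ppi := by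
  obtain ⟨hPprob, hPint⟩ := hPpi
  haveI := hPprob
  have ht1 : ¬ T < 1 := by omega
  obtain ⟨mV1, CV1, hCV10, hCV1⟩ := vpol_meas_bdd T P ν β r p hr hp hβ hlog 1
  obtain ⟨mW1, CW1, hCW10, hCW1⟩ := WF_meas_bdd T P ν β r p hr hp hβ hlog 1
  obtain ⟨mS1, CS1, hCS10, hCS1⟩ := SSq_meas_bdd T P ν β r p hr hp hβ hlog 1
  obtain ⟨HH1, HH2⟩ := polExp_H T P ν β r p hr hp hβ hlog 1
  set J : ℝ := ∫ s, IRL.Vpol T P ν β p r 1 s ∂P0 with hJ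
  -- the recentred return functional
  set Z : (ℕ → S × A) → ℝ := fun τ =>
    (IRL.Vpol T P ν β p r 1 (τ 1).1 - J) + WF T P ν β r p 1 τ with hZ
  have hZm : Measurable Z :=
    ((mV1.comp (measurable_fst.comp (measurable_pi_apply 1))).sub measurable_const).add mW1
  have hZb : ∀ τ, |Z τ| ≤ (CV1 + |J|) + CW1 := by
    intro τ
    refine le_trans (abs_add_le _ _) ?_
    have h1 : |IRL.Vpol T P ν β p r 1 (τ 1).1 - J| ≤ CV1 + |J| := by
      refine le_trans (abs_sub _ _) ?_
      have := hCV1 (τ 1).1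
      linarith
    have := hCW1 τ
    linarith
  -- pointwise decomposition of the return
  have hyTzero : ∀ τ, yF T P ν β r p T τ = 0 := by
    intro τ
    simp [yF, pvF, vpol_top T P ν β r p]
  have hkey : ∀ τ, G τ = J + Z τ := by
    intro τ
    rw [hG, hZ]
    beta_reduce
    have hper : ∀ u, r u (τ u).1 (τ u).2 - β * Real.log (p u (τ u).1 (τ u).2)
        = (aF T P ν β r p u τ + yF T P ν β r p u τ)
          + (IRL.Vpol T P ν β p r u (τ u).1
            - IRL.Vpol T P ν β p r (u + 1) (τ (u + 1)).1) := by
      intro u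
      simp only [aF, yF, pvF, IRL.Apol, IRL.Qpol]
      have hq : P u ((τ u).1, (τ u).2) = P u (τ u) := by rw [Prod.mk.eta]
      rw [hq]
      ring
    rw [Finset.sum_congr rfl (fun u _ => hper u), Finset.sum_add_distrib]
    have htel : ∑ u ∈ Finset.Icc 1 T, (IRL.Vpol T P ν β p r u (τ u).1
        - IRL.Vpol T P ν β p r (u + 1) (τ (u + 1)).1)
        = IRL.Vpol T P ν β p r 1 (τ 1).1 := by
      have h0 : Finset.Icc 1 T = Finset.Ico 1 (T + 1) := (Finset.Ico_add_one_right_eq_Icc 1 T).symm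
      rw [h0, Finset.sum_Ico_eq_sum_range]
      have h1 : ∀ i, IRL.Vpol T P ν β p r (1 + i) (τ (1 + i)).1
          - IRL.Vpol T P ν β p r (1 + i + 1) (τ (1 + i + 1)).1
          = (fun j => IRL.Vpol T P ν β p r (1 + j) (τ (1 + j)).1) i
            - (fun j => IRL.Vpol T P ν β p r (1 + j) (τ (1 + j)).1) (i + 1) := by
        intro i
        simp only []
        rw [show 1 + (i + 1) = 1 + i + 1 by omega]
      rw [Finset.sum_congr rfl (fun i _ => h1 i), Finset.sum_range_sub']
      have h2 : T + 1 - 1 = T := by omega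
      rw [h2]
      have h3 : IRL.Vpol T P ν β p r (1 + T) (τ (1 + T)).1 = 0 := by
        have := vpol_top T P ν β r p (τ (1 + T)).1
        rw [show T + 1 = 1 + T by omega] at this
        exact this
      rw [h3, sub_zero]
    rw [htel]
    have hWFd : WF T P ν β r p 1 τ
        = ∑ u ∈ Finset.Icc 1 T, (aF T P ν β r p u τ + yF T P ν β r p u τ) := rfl
    rw [hWFd]
    ring
  have hGm : Measurable G := by
    have : G = fun τ => J + Z τ := funext hkey
    rw [this]
    exact measurable_const.add hZm
  have hGb : ∀ τ, |G τ| ≤ |J| + ((CV1 + |J|) + CW1) := by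
    intro τ
    rw [hkey τ]
    refine le_trans (abs_add_le _ _) ?_
    have := hZb τ
    linarith
  -- polExp computations at time 1
  have hpeZ : ∀ s, polExp T P (IRL.densKernel ν p) Z 1 s
      = IRL.Vpol T P ν β p r 1 s - J := by
    intro s
    have hstep := polExp_fst' T P 1 ht1 (IRL.densKernel ν p)
      (fun x σ => (IRL.Vpol T P ν β p r 1 x - J) + WF T P ν β r p 1 σ) s
      Z (fun τ => (IRL.Vpol T P ν β p r 1 s - J) + WF T P ν β r p 1 τ)
      (fun σ => rfl) (fun σ => rfl)
    rw [hstep]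
    rw [polExp_add T P ν p hp 1 (fun _ => IRL.Vpol T P ν β p r 1 s - J)
      (WF T P ν β r p 1) (|IRL.Vpol T P ν β p r 1 s - J|) CW1
      measurable_const (fun τ => le_refl _) mW1 hCW1 s]
    rw [polExp_const T P ν p hp 1 _ s, HH1 s, add_zero]
  have hpeZ2 : ∀ s, polExp T P (IRL.densKernel ν p) (fun τ => (Z τ) ^ 2) 1 s
      = (IRL.Vpol T P ν β p r 1 s - J) ^ 2
        + polExp T P (IRL.densKernel ν p) (SSq T P ν β r p 1) 1 s := by
    intro s
    have hstep := polExp_fst' T P 1 ht1 (IRL.densKernel ν p)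
      (fun x σ => ((IRL.Vpol T P ν β p r 1 x - J) + WF T P ν β r p 1 σ) ^ 2) s
      (fun τ => (Z τ) ^ 2)
      (fun τ => ((IRL.Vpol T P ν β p r 1 s - J) + WF T P ν β r p 1 τ) ^ 2)
      (fun σ => rfl) (fun σ => rfl)
    rw [hstep]
    have hexp : ∀ τ, ((IRL.Vpol T P ν β p r 1 s - J) + WF T P ν β r p 1 τ) ^ 2
        = (IRL.Vpol T P ν β p r 1 s - J) ^ 2
          + ((2 * (IRL.Vpol T P ν β p r 1 s - J)) * WF T P ν β r p 1 τ
            + (WF T P ν β r p 1 τ) ^ 2) := fun τ => by ring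
    rw [polExp_congr T P _ hexp]
    have hsqm : Measurable fun σ : ℕ → S × A => (WF T P ν β r p 1 σ) ^ 2 :=
      mW1.pow measurable_const
    have hsqb : ∀ τ, |(WF T P ν β r p 1 τ) ^ 2| ≤ CW1 ^ 2 := by
      intro τ
      rw [abs_pow]
      exact pow_le_pow_left₀ (abs_nonneg _) (hCW1 τ) 2
    have hrestm : Measurable fun τ : ℕ → S × A =>
        (2 * (IRL.Vpol T P ν β p r 1 s - J)) * WF T P ν β r p 1 τ
          + (WF T P ν β r p 1 τ) ^ 2 := (mW1.const_mul _).add hsqm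
    have hrestb : ∀ τ, |(2 * (IRL.Vpol T P ν β p r 1 s - J)) * WF T P ν β r p 1 τ
          + (WF T P ν β r p 1 τ) ^ 2|
        ≤ |2 * (IRL.Vpol T P ν β p r 1 s - J)| * CW1 + CW1 ^ 2 := by
      intro τ
      refine le_trans (abs_add_le _ _) ?_
      have h1 : |(2 * (IRL.Vpol T P ν β p r 1 s - J)) * WF T P ν β r p 1 τ|
          ≤ |2 * (IRL.Vpol T P ν β p r 1 s - J)| * CW1 := by
        rw [abs_mul]
        exact mul_le_mul_of_nonneg_left (hCW1 τ) (abs_nonneg _)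
      have h2 := hsqb τ
      linarith
    rw [polExp_add T P ν p hp 1 (fun _ => (IRL.Vpol T P ν β p r 1 s - J) ^ 2)
      (fun τ => (2 * (IRL.Vpol T P ν β p r 1 s - J)) * WF T P ν β r p 1 τ
        + (WF T P ν β r p 1 τ) ^ 2)
      (|(IRL.Vpol T P ν β p r 1 s - J) ^ 2|)
      (|2 * (IRL.Vpol T P ν β p r 1 s - J)| * CW1 + CW1 ^ 2)
      measurable_const (fun τ => le_refl _) hrestm hrestb s]
    rw [polExp_const T P ν p hp 1 _ s]
    rw [polExp_add T P ν p hp 1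
      (fun τ => (2 * (IRL.Vpol T P ν β p r 1 s - J)) * WF T P ν β r p 1 τ)
      (fun τ => (WF T P ν β r p 1 τ) ^ 2)
      (|2 * (IRL.Vpol T P ν β p r 1 s - J)| * CW1) (CW1 ^ 2)
      (mW1.const_mul _) (fun τ => by
        rw [abs_mul]
        exact mul_le_mul_of_nonneg_left (hCW1 τ) (abs_nonneg _)) hsqm hsqb s]
    rw [polExp_smul T P ν p hp 1 _ (WF T P ν β r p 1) CW1 mW1 hCW1 s]
    rw [HH1 s, HH2 s]
    ring
  have hpeY0 : ∀ s, polExp T P (IRL.densKernel ν p)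
      (fun τ => (IRL.Vpol T P ν β p r 1 (τ 1).1 - J) ^ 2) 1 s
      = (IRL.Vpol T P ν β p r 1 s - J) ^ 2 := by
    intro s
    have hstep := polExp_fst' T P 1 ht1 (IRL.densKernel ν p)
      (fun x _ => (IRL.Vpol T P ν β p r 1 x - J) ^ 2) s
      (fun τ => (IRL.Vpol T P ν β p r 1 (τ 1).1 - J) ^ 2)
      (fun _ => (IRL.Vpol T P ν β p r 1 s - J) ^ 2)
      (fun σ => rfl) (fun σ => rfl)
    rw [hstep]
    exact polExp_const T P ν p hp 1 _ s
  -- integrability of V1 over P0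
  have hIV1 : Integrable (fun s => IRL.Vpol T P ν β p r 1 s) P0 :=
    integrable_of_bdd CV1 mV1.aestronglyMeasurable hCV1
  -- expectation of Z vanishes
  have hEZ : ∫ τ, Z τ ∂Ppi = 0 := by
    rw [hPint Z hZm ⟨(CV1 + |J|) + CW1, hZb⟩]
    rw [intc P0 _ _ hpeZ]
    rw [integral_sub hIV1 (integrable_const J), integral_const]
    simp [hJ]
  have hEG : ∫ τ, G τ ∂Ppi = J := by
    rw [intc Ppi _ _ hkey, integral_add (integrable_const J)
      (integrable_of_bdd _ hZm.aestronglyMeasurable hZb), hEZ, integral_const]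
    simp
  -- variance as second moment of Z
  have hmem : MeasureTheory.MemLp G 2 Ppi :=
    MeasureTheory.MemLp.of_bound hGm.aestronglyMeasurable _
      (Filter.Eventually.of_forall (fun τ => by simpa using hGb τ))
  have hvar : variance G Ppi = ∫ τ, (Z τ) ^ 2 ∂Ppi := by
    rw [ProbabilityTheory.variance_eq_integral hmem.aemeasurable]
    refine intc _ _ _ (fun τ => ?_)
    rw [hEG, hkey τ]
    ring
  -- second moment of Z via polExp
  have hZ2b : ∀ τ, |(Z τ) ^ 2| ≤ ((CV1 + |J|) + CW1) ^ 2 := by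
    intro τ
    rw [abs_pow]
    exact pow_le_pow_left₀ (abs_nonneg _) (hZb τ) 2
  have hEm : Measurable fun s =>
      polExp T P (IRL.densKernel ν p) (SSq T P ν β r p 1) 1 s :=
    polExp_meas T P ν p hp 1 _ CS1 mS1 hCS1
  have hEb : ∀ s, |polExp T P (IRL.densKernel ν p) (SSq T P ν β r p 1) 1 s| ≤ CS1 :=
    fun s => polExp_bound T P ν p hp 1 _ CS1 mS1 hCS1 s
  have hZ2 : ∫ τ, (Z τ) ^ 2 ∂Ppi
      = (∫ s, (IRL.Vpol T P ν β p r 1 s - J) ^ 2 ∂P0)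
        + ∫ s, polExp T P (IRL.densKernel ν p) (SSq T P ν β r p 1) 1 s ∂P0 := by
    rw [hPint (fun τ => (Z τ) ^ 2) (hZm.pow measurable_const) ⟨_, hZ2b⟩]
    rw [intc P0 _ _ hpeZ2]
    refine integral_add ?_ (integrable_of_bdd CS1 hEm.aestronglyMeasurable hEb)
    refine integrable_of_bdd ((CV1 + |J|) ^ 2) ?_ ?_
    · exact ((mV1.sub measurable_const).pow measurable_const).aestronglyMeasurable
    · intro s
      rw [abs_pow]
      refine pow_le_pow_left₀ (abs_nonneg _) ?_ 2
      refine le_trans (abs_sub _ _) ?_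
      have := hCV1 s
      linarith
  -- identify the SSq part with the sum of expectations over Ppi
  have haFu : ∀ u, Measurable (aF T P ν β r p u) ∧
      ∃ C, 0 ≤ C ∧ ∀ τ, |aF T P ν β r p u τ| ≤ C :=
    fun u => aF_meas_bdd T P ν β r p hr hp hβ hlog u
  have hyFu : ∀ u, Measurable (yF T P ν β r p u) ∧
      ∃ C, 0 ≤ C ∧ ∀ τ, |yF T P ν β r p u τ| ≤ C :=
    fun u => yF_meas_bdd T P ν β r p hr hp hβ hlog u
  have hIaF2 : ∀ u, Integrable (fun τ => (aF T P ν β r p u τ) ^ 2) Ppi := by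
    intro u
    obtain ⟨mA, CA, hCA0, hCA⟩ := haFu u
    refine integrable_of_bdd (CA ^ 2) ((mA.pow measurable_const).aestronglyMeasurable) ?_
    intro τ
    rw [abs_pow]
    exact pow_le_pow_left₀ (abs_nonneg _) (hCA τ) 2
  have hIyF2 : ∀ u, Integrable (fun τ => (yF T P ν β r p u τ) ^ 2) Ppi := by
    intro u
    obtain ⟨mY, CY, hCY0, hCY⟩ := hyFu u
    refine integrable_of_bdd (CY ^ 2) ((mY.pow measurable_const).aestronglyMeasurable) ?_
    intro τ
    rw [abs_pow]
    exact pow_le_pow_left₀ (abs_nonneg _) (hCY τ) 2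
  have hSSqInt : ∫ s, polExp T P (IRL.densKernel ν p) (SSq T P ν β r p 1) 1 s ∂P0
      = ∑ u ∈ Finset.Icc 1 T, ((∫ τ, (aF T P ν β r p u τ) ^ 2 ∂Ppi)
          + ∫ τ, (yF T P ν β r p u τ) ^ 2 ∂Ppi) := by
    rw [← hPint (SSq T P ν β r p 1) mS1 ⟨CS1, hCS1⟩]
    have hSSq : ∀ τ, SSq T P ν β r p 1 τ
        = ∑ u ∈ Finset.Icc 1 T, ((aF T P ν β r p u τ) ^ 2 + (yF T P ν β r p u τ) ^ 2) :=
      fun τ => rfl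
    rw [intc Ppi _ _ hSSq,
      integral_finset_sum (f := fun u τ => (aF T P ν β r p u τ) ^ 2 + (yF T P ν β r p u τ) ^ 2)
        _ (fun u _ => (hIaF2 u).add (hIyF2 u))]
    exact Finset.sum_congr rfl (fun u _ => integral_add (hIaF2 u) (hIyF2 u))
  -- identify the Y-terms
  have hY0 : ∀ τ, Y 0 τ = IRL.Vpol T P ν β p r 1 (τ 1).1 - J := by
    intro τ
    rw [hY]
    simp
  have hEY0 : ∫ τ, (Y 0 τ) ^ 2 ∂Ppi = ∫ s, (IRL.Vpol T P ν β p r 1 s - J) ^ 2 ∂P0 := by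
    have h1 : ∀ τ, (Y 0 τ) ^ 2 = (IRL.Vpol T P ν β p r 1 (τ 1).1 - J) ^ 2 :=
      fun τ => by rw [hY0 τ]
    rw [intc Ppi _ _ h1]
    rw [hPint (fun τ => (IRL.Vpol T P ν β p r 1 (τ 1).1 - J) ^ 2)
      (((mV1.comp (measurable_fst.comp (measurable_pi_apply 1))).sub
        measurable_const).pow measurable_const)
      ⟨(CV1 + |J|) ^ 2, fun τ => ?_⟩]
    · exact intc P0 _ _ hpeY0
    · rw [abs_pow]
      refine pow_le_pow_left₀ (abs_nonneg _) ?_ 2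
      refine le_trans (abs_sub _ _) ?_
      have := hCV1 (τ 1).1
      linarith
  have hYu : ∀ u, u ≠ 0 → ∀ τ, Y u τ = yF T P ν β r p u τ := by
    intro u hu τ
    rw [hY]
    beta_reduce
    rw [if_neg hu]
    have hq : P u ((τ u).1, (τ u).2) = P u (τ u) := by rw [Prod.mk.eta]
    rw [hq]
    rfl
  -- finset manipulations
  have hrange : ∑ t ∈ Finset.range T, ∫ τ, (Y t τ) ^ 2 ∂Ppi
      = (∫ τ, (Y 0 τ) ^ 2 ∂Ppi)
        + ∑ t ∈ Finset.Icc 1 (T - 1), ∫ τ, (Y t τ) ^ 2 ∂Ppi := by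
    have h1 : Finset.Ico 1 T = Finset.Icc 1 (T - 1) := by
      rw [← Finset.Ico_add_one_right_eq_Icc]
      congr 1
      omega
    rw [Finset.range_eq_Ico, Finset.sum_eq_sum_Ico_succ_bot (by omega : 0 < T), h1]
  have hyTint : ∫ τ, (yF T P ν β r p T τ) ^ 2 ∂Ppi = 0 := by
    have h1 : ∀ τ, (yF T P ν β r p T τ) ^ 2 = 0 := fun τ => by rw [hyTzero τ]; ring
    rw [intc Ppi _ _ h1, integral_zero]
  have hysum : ∑ u ∈ Finset.Icc 1 T, ∫ τ, (yF T P ν β r p u τ) ^ 2 ∂Ppi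
      = ∑ u ∈ Finset.Icc 1 (T - 1), ∫ τ, (Y u τ) ^ 2 ∂Ppi := by
    have h2 := Finset.sum_Icc_succ_top (show 1 ≤ T - 1 + 1 by omega)
      (fun u => ∫ τ, (yF T P ν β r p u τ) ^ 2 ∂Ppi)
    rw [show T - 1 + 1 = T by omega] at h2
    rw [h2, hyTint, add_zero]
    refine Finset.sum_congr rfl (fun u hu => ?_)
    have hu1 : 1 ≤ u := (Finset.mem_Icc.mp hu).1
    refine intc _ _ _ (fun τ => ?_)
    rw [hYu u (by omega) τ]
  -- put everything together
  rw [hvar, hZ2, hSSqInt, Finset.sum_add_distrib, hrange]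
  have haFsum : ∑ u ∈ Finset.Icc 1 T, ∫ τ, (aF T P ν β r p u τ) ^ 2 ∂Ppi
      = ∑ t ∈ Finset.Icc 1 T, ∫ τ, (IRL.Apol T P ν β p r t (τ t).1 (τ t).2) ^ 2 ∂Ppi :=
    Finset.sum_congr rfl (fun u _ => intc _ _ _ (fun τ => rfl))
  rw [haFsum, hysum, hEY0]
  ring
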